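/- arXiv:2002.00495 — 4 statements merged into one kernel-verified Lean document; each statement's English description precedes it below -/
import Mathlib

section
/- Let d ≥ 1, let k ≥ 1 be an integer, let ζ > 0, β ≥ 0 and ρ̄ ∈ (0,1). Let A be a d×d real matrix with ‖A^t‖₂ ≤ β·ρ̄^t for every integer t ≥ 0, let v ∈ ℝ^d, let w ∈ ℝ^d with ‖w‖₂ = 1, and let s : ℕ → ℝ^d be k-periodic (s_{t+k} = s_t for all t). Set α := Σ_{t=0}^{k−1} (wᵀ s_t)². Then for every integer T' ≥ 0 such that ‖v‖₂²·β²·ρ̄^{2T'}/(1−ρ̄²) ≤ k·ζ/2 and 2·‖v‖₂·β·ρ̄^{T'}·√α/√(1−ρ̄²) ≤ k·ζ/2, one has |Σ_{t=T'}^{T'+k−1} (wᵀ(s_t + A^t·v))² − α| ≤ k·ζ. -/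
noncomputable section

open Matrix

/-- Euclidean norm of a real vector. -/
def enormR {n : Type*} [Fintype n] (v : n → ℝ) : ℝ :=
  Real.sqrt (∑ i, (v i) ^ 2)

/-- Spectral norm (ℓ² → ℓ² operator norm) of a real matrix. -/
def snormR {m n : Type*} [Fintype m] [Fintype n] (M : Matrix m n ℝ) : ℝ :=
  sSup {r : ℝ | ∃ v : n → ℝ, enormR v ≤ 1 ∧ r = enormR (M.mulVec v)}

lemma enormR_nonneg {n : Type*} [Fintype n] (v : n → ℝ) : 0 ≤ enormR v :=
  Real.sqrt_nonneg _

lemma enormR_smul {n : Type*} [Fintype n] (c : ℝ) (v : n → ℝ) :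
    enormR (c • v) = |c| * enormR v := by
  unfold enormR
  rw [← Real.sqrt_sq_eq_abs, ← Real.sqrt_mul (sq_nonneg c), Finset.mul_sum]
  congr 1
  exact Finset.sum_congr rfl fun i _ => by simp [mul_pow]

lemma abs_dotProduct_le {n : Type*} [Fintype n] (w x : n → ℝ) :
    |dotProduct w x| ≤ enormR w * enormR x := by
  have h := Finset.sum_mul_sq_le_sq_mul_sq Finset.univ w x
  have := Real.sqrt_le_sqrt h
  rw [Real.sqrt_mul (Finset.sum_nonneg fun i _ => sq_nonneg _)] at this
  calc |dotProduct w x| = Real.sqrt ((∑ i, w i * x i)^2) := by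
        rw [Real.sqrt_sq_eq_abs]; rfl
    _ ≤ _ := this

lemma enormR_mulVec_le {m n : Type*} [Fintype m] [Fintype n] (M : Matrix m n ℝ)
    (x : n → ℝ) : enormR (M.mulVec x) ≤ snormR M * enormR x := by
  have hbdd : BddAbove {r : ℝ | ∃ v : n → ℝ, enormR v ≤ 1 ∧ r = enormR (M.mulVec v)} := by
    refine ⟨Real.sqrt (∑ i, ∑ j, M i j ^ 2), ?_⟩
    rintro r ⟨u, hu, rfl⟩
    unfold enormR
    apply Real.sqrt_le_sqrt
    have step : ∀ i, (M.mulVec u i) ^ 2 ≤ (∑ j, M i j ^ 2) * ∑ j, u j ^ 2 := by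
      intro i
      exact Finset.sum_mul_sq_le_sq_mul_sq Finset.univ (fun j => M i j) u
    calc ∑ i, (M.mulVec u i) ^ 2 ≤ ∑ i, (∑ j, M i j ^ 2) * ∑ j, u j ^ 2 :=
          Finset.sum_le_sum fun i _ => step i
      _ ≤ ∑ i, (∑ j, M i j ^ 2) * 1 := by
          refine Finset.sum_le_sum fun i _ => ?_
          refine mul_le_mul_of_nonneg_left ?_ (Finset.sum_nonneg fun j _ => sq_nonneg _)
          have h1 : enormR u ^ 2 ≤ 1 ^ 2 := by
            have := enormR_nonneg u
            nlinarith
          simpa [enormR, Real.sq_sqrt (Finset.sum_nonneg fun j _ => sq_nonneg (u j))] using h1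
      _ = ∑ i, ∑ j, M i j ^ 2 := by simp
  by_cases hx : x = 0
  · simp [hx, enormR, Matrix.mulVec_zero]
  · have hxpos : 0 < enormR x := by
      rcases Function.ne_iff.mp hx with ⟨i, hi⟩
      apply Real.sqrt_pos.mpr
      have : 0 < x i ^ 2 := by
        have := abs_pos.mpr hi
        nlinarith [sq_abs (x i)]
      exact lt_of_lt_of_le this (Finset.single_le_sum (fun j _ => sq_nonneg (x j))
        (Finset.mem_univ i))
    set u : n → ℝ := (enormR x)⁻¹ • x with hu
    have hnu : enormR u = 1 := by
      rw [hu, enormR_smul, abs_of_pos (inv_pos.mpr hxpos), inv_mul_cancel₀ hxpos.ne']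
    have hmem : enormR (M.mulVec u) ∈
        {r : ℝ | ∃ v : n → ℝ, enormR v ≤ 1 ∧ r = enormR (M.mulVec v)} :=
      ⟨u, le_of_eq hnu, rfl⟩
    have hle : enormR (M.mulVec u) ≤ snormR M := le_csSup hbdd hmem
    have hxu : x = enormR x • u := by
      rw [hu, smul_smul, mul_inv_cancel₀ hxpos.ne', one_smul]
    calc enormR (M.mulVec x) = enormR (M.mulVec (enormR x • u)) := by rw [← hxu]
      _ = enormR (enormR x • M.mulVec u) := by rw [Matrix.mulVec_smul]
      _ = enormR x * enormR (M.mulVec u) := by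
          rw [enormR_smul, abs_of_pos hxpos]
      _ ≤ snormR M * enormR x := by
          rw [mul_comm]; exact mul_le_mul_of_nonneg_right hle hxpos.le

/-- **Transient lemma.**  If `s` is `k`-periodic, `‖A^t‖₂ ≤ β·ρ̄^t`, and the burn-in
conditions on `T'` hold, then the window power of `t ↦ s_t + A^t·v` in direction `w` over
`[T', T'+k−1]` is within `k·ζ` of the steady-state window power `α = Σ_{t<k} (wᵀ s_t)²`. -/
theorem stmt5 {d : ℕ} (hd : 1 ≤ d) (k : ℕ) (hk : 1 ≤ k) (ζ β ρ : ℝ)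
    (hζ : 0 < ζ) (hβ : 0 ≤ β) (hρ0 : 0 < ρ) (hρ1 : ρ < 1)
    (A : Matrix (Fin d) (Fin d) ℝ)
    (hA : ∀ t : ℕ, snormR (A ^ t) ≤ β * ρ ^ t)
    (v w : Fin d → ℝ) (hw : enormR w = 1)
    (s : ℕ → Fin d → ℝ) (hper : ∀ t, s (t + k) = s t) :
    ∀ T' : ℕ,
      enormR v ^ 2 * β ^ 2 * ρ ^ (2 * T') / (1 - ρ ^ 2) ≤ k * ζ / 2 →
      2 * enormR v * β * ρ ^ T' *
          Real.sqrt (∑ t ∈ Finset.range k, (dotProduct w (s t)) ^ 2) /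
          Real.sqrt (1 - ρ ^ 2) ≤ k * ζ / 2 →
      |(∑ j ∈ Finset.range k,
          (dotProduct w (s (T' + j) + (A ^ (T' + j)).mulVec v)) ^ 2) -
        ∑ t ∈ Finset.range k, (dotProduct w (s t)) ^ 2| ≤ k * ζ := by
  intro T' h1 h2
  set α := ∑ t ∈ Finset.range k, (dotProduct w (s t)) ^ 2 with hα
  set a : ℕ → ℝ := fun j => dotProduct w (s (T' + j)) with ha
  set b : ℕ → ℝ := fun j => dotProduct w ((A ^ (T' + j)).mulVec v) with hb
  -- periodic shift
  have hg : ∀ t, (dotProduct w (s (t + k))) ^ 2 = (dotProduct w (s t)) ^ 2 := by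
    intro t; rw [hper]
  have hshift : ∀ T : ℕ,
      ∑ j ∈ Finset.range k, (dotProduct w (s (T + j))) ^ 2 = α := by
    intro T
    induction T with
    | zero => simp [hα]
    | succ T ih =>
      have e1 : ∑ j ∈ Finset.range (k + 1), (dotProduct w (s (T + j))) ^ 2 =
          (∑ j ∈ Finset.range k, (dotProduct w (s (T + (j + 1)))) ^ 2) +
            (dotProduct w (s (T + 0))) ^ 2 := Finset.sum_range_succ' _ k
      have e2 : ∑ j ∈ Finset.range (k + 1), (dotProduct w (s (T + j))) ^ 2 =
          (∑ j ∈ Finset.range k, (dotProduct w (s (T + j))) ^ 2) +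
            (dotProduct w (s (T + k))) ^ 2 := Finset.sum_range_succ _ k
      have e3 : (dotProduct w (s (T + k))) ^ 2 =
          (dotProduct w (s (T + 0))) ^ 2 := by rw [hg]; rw [Nat.add_zero]
      have e4 : ∑ j ∈ Finset.range k, (dotProduct w (s (T + 1 + j))) ^ 2 =
          ∑ j ∈ Finset.range k, (dotProduct w (s (T + (j + 1)))) ^ 2 := by
        refine Finset.sum_congr rfl fun j _ => ?_
        ring_nf
      rw [e4]
      have := e1.symm.trans e2
      rw [e3] at this
      have : ∑ j ∈ Finset.range k, (dotProduct w (s (T + (j + 1)))) ^ 2 =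
          ∑ j ∈ Finset.range k, (dotProduct w (s (T + j))) ^ 2 := by linarith
      rw [this, ih]
  have hsa : ∑ j ∈ Finset.range k, a j ^ 2 = α := hshift T'
  -- bound on b
  set C : ℝ := enormR v * β * ρ ^ T' with hC
  have hCnn : 0 ≤ C := by
    rw [hC]
    exact mul_nonneg (mul_nonneg (enormR_nonneg v) hβ) (pow_nonneg hρ0.le _)
  have hbj : ∀ j, |b j| ≤ C * ρ ^ j := by
    intro j
    calc |b j| ≤ enormR w * enormR ((A ^ (T' + j)).mulVec v) := abs_dotProduct_le _ _
      _ = enormR ((A ^ (T' + j)).mulVec v) := by rw [hw, one_mul]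
      _ ≤ snormR (A ^ (T' + j)) * enormR v :=
          enormR_mulVec_le _ _
      _ ≤ (β * ρ ^ (T' + j)) * enormR v :=
          mul_le_mul_of_nonneg_right (hA _) (enormR_nonneg v)
      _ = C * ρ ^ j := by rw [hC, pow_add]; ring
  have hρ2 : ρ ^ 2 < 1 := by nlinarith
  have hρ2pos : 0 < 1 - ρ ^ 2 := by linarith
  -- geometric bound
  have hgeo : ∑ j ∈ Finset.range k, (ρ ^ 2) ^ j ≤ 1 / (1 - ρ ^ 2) := by
    rw [geom_sum_eq (ne_of_lt hρ2)]
    have h0 : 0 ≤ (ρ ^ 2) ^ k := by positivity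
    have heq : ((ρ ^ 2) ^ k - 1) / (ρ ^ 2 - 1) = (1 - (ρ ^ 2) ^ k) / (1 - ρ ^ 2) := by
      rw [← neg_sub ((ρ ^ 2) ^ k), ← neg_sub (ρ ^ 2), neg_div_neg_eq]
    rw [heq, div_le_div_iff₀ hρ2pos hρ2pos]
    nlinarith
  have hSb : ∑ j ∈ Finset.range k, b j ^ 2 ≤ C ^ 2 / (1 - ρ ^ 2) := by
    calc ∑ j ∈ Finset.range k, b j ^ 2
        ≤ ∑ j ∈ Finset.range k, C ^ 2 * (ρ ^ 2) ^ j := by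
          refine Finset.sum_le_sum fun j _ => ?_
          have := hbj j
          have h0 : 0 ≤ |b j| := abs_nonneg _
          have : b j ^ 2 ≤ (C * ρ ^ j) ^ 2 := by
            rw [← sq_abs (b j)]
            exact pow_le_pow_left₀ h0 (hbj j) 2
          calc b j ^ 2 ≤ (C * ρ ^ j) ^ 2 := this
            _ = C ^ 2 * (ρ ^ 2) ^ j := by rw [mul_pow, ← pow_mul, ← pow_mul, Nat.mul_comm]
      _ = C ^ 2 * ∑ j ∈ Finset.range k, (ρ ^ 2) ^ j := by rw [Finset.mul_sum]
      _ ≤ C ^ 2 * (1 / (1 - ρ ^ 2)) := mul_le_mul_of_nonneg_left hgeo (sq_nonneg C)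
      _ = C ^ 2 / (1 - ρ ^ 2) := by ring
  have hCB : C ^ 2 / (1 - ρ ^ 2) = enormR v ^ 2 * β ^ 2 * ρ ^ (2 * T') / (1 - ρ ^ 2) := by
    rw [hC]
    rw [mul_pow, mul_pow, ← pow_mul, Nat.mul_comm]
  have hSb' : ∑ j ∈ Finset.range k, b j ^ 2 ≤ k * ζ / 2 := by
    rw [hCB] at hSb; linarith
  -- sqrt bound
  have hSbnn : 0 ≤ ∑ j ∈ Finset.range k, b j ^ 2 :=
    Finset.sum_nonneg fun j _ => sq_nonneg _
  have hsqrtSb : Real.sqrt (∑ j ∈ Finset.range k, b j ^ 2) ≤ C / Real.sqrt (1 - ρ ^ 2) := by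
    have h := Real.sqrt_le_sqrt hSb
    calc Real.sqrt (∑ j ∈ Finset.range k, b j ^ 2) ≤ Real.sqrt (C ^ 2 / (1 - ρ ^ 2)) := h
      _ = C / Real.sqrt (1 - ρ ^ 2) := by
          rw [Real.sqrt_div (sq_nonneg C), Real.sqrt_sq hCnn]
  -- cross term
  have hαnn : 0 ≤ α := Finset.sum_nonneg fun t _ => sq_nonneg _
  have hcross : |∑ j ∈ Finset.range k, a j * b j| ≤
      Real.sqrt α * Real.sqrt (∑ j ∈ Finset.range k, b j ^ 2) := by
    have h := Finset.sum_mul_sq_le_sq_mul_sq (Finset.range k) a b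
    rw [hsa] at h
    have h2' := Real.sqrt_le_sqrt h
    rw [Real.sqrt_mul hαnn, Real.sqrt_sq_eq_abs] at h2'
    exact h2'
  -- expansion
  have hexp : (∑ j ∈ Finset.range k,
      (dotProduct w (s (T' + j) + (A ^ (T' + j)).mulVec v)) ^ 2) - α =
      2 * (∑ j ∈ Finset.range k, a j * b j) + ∑ j ∈ Finset.range k, b j ^ 2 := by
    have hdot : ∀ j, dotProduct w (s (T' + j) + (A ^ (T' + j)).mulVec v) = a j + b j := by
      intro j; rw [dotProduct_add]
    calc (∑ j ∈ Finset.range k,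
        (dotProduct w (s (T' + j) + (A ^ (T' + j)).mulVec v)) ^ 2) - α
        = (∑ j ∈ Finset.range k, (a j + b j) ^ 2) - ∑ j ∈ Finset.range k, a j ^ 2 := by
          rw [← hsa]
          congr 1
          exact Finset.sum_congr rfl fun j _ => by rw [hdot]
      _ = ∑ j ∈ Finset.range k, ((a j + b j) ^ 2 - a j ^ 2) := by
          rw [Finset.sum_sub_distrib]
      _ = ∑ j ∈ Finset.range k, (2 * (a j * b j) + b j ^ 2) := by
          exact Finset.sum_congr rfl fun j _ => by ring
      _ = 2 * (∑ j ∈ Finset.range k, a j * b j) + ∑ j ∈ Finset.range k, b j ^ 2 := by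
          rw [Finset.sum_add_distrib, Finset.mul_sum]
  rw [hexp]
  have hcross2 : 2 * |∑ j ∈ Finset.range k, a j * b j| ≤ k * ζ / 2 := by
    calc 2 * |∑ j ∈ Finset.range k, a j * b j|
        ≤ 2 * (Real.sqrt α * Real.sqrt (∑ j ∈ Finset.range k, b j ^ 2)) := by linarith
      _ ≤ 2 * (Real.sqrt α * (C / Real.sqrt (1 - ρ ^ 2))) := by
          have := Real.sqrt_nonneg α
          have := Real.sqrt_nonneg (∑ j ∈ Finset.range k, b j ^ 2)
          nlinarith [hsqrtSb]
      _ = 2 * enormR v * β * ρ ^ T' * Real.sqrt α / Real.sqrt (1 - ρ ^ 2) := by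
          rw [hC]; ring
      _ ≤ k * ζ / 2 := h2
  calc |2 * (∑ j ∈ Finset.range k, a j * b j) + ∑ j ∈ Finset.range k, b j ^ 2|
      ≤ 2 * |∑ j ∈ Finset.range k, a j * b j| + |∑ j ∈ Finset.range k, b j ^ 2| := by
        calc _ ≤ |2 * (∑ j ∈ Finset.range k, a j * b j)| + |∑ j ∈ Finset.range k, b j ^ 2| :=
              abs_add_le _ _
          _ = _ := by rw [abs_mul, abs_two]
    _ = 2 * |∑ j ∈ Finset.range k, a j * b j| + ∑ j ∈ Finset.range k, b j ^ 2 := by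
        rw [abs_of_nonneg hSbnn]
    _ ≤ k * ζ / 2 + k * ζ / 2 := add_le_add hcross2 hSb'
    _ = k * ζ := by ring
end
end

section
/- Let d ≥ 1 and k ≥ 1 be integers, let γ > 0, and let λ₁,…,λ_d ∈ [0,1). Let Λ be the d×d real diagonal matrix with diagonal entries λᵢ, set S := Σ_{i=1}^d (1−λᵢ²)/(1−λᵢ^{2k}) and c := γ²/S. Then: (i) for every d×d real symmetric positive-semidefinite matrix Σ with trace(Σ) ≤ γ², λmin(Σ_{t=0}^{k−1} Λ^t·Σ·Λ^t) ≤ c; and (ii) the diagonal matrix Σ* with entries (Σ*)_{jj} := c·(1−λⱼ²)/(1−λⱼ^{2k}) is positive semidefinite with trace(Σ*) = γ² and satisfies Σ_{t=0}^{k−1} Λ^t·Σ*·Λ^t = c·I, so the bound in (i) is attained. -/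
noncomputable section

open Matrix

/-- Smallest eigenvalue of a real symmetric matrix, as the infimum of the quadratic form
over unit vectors. -/
def lamMinR {d : ℕ} (N : Matrix (Fin d) (Fin d) ℝ) : ℝ :=
  ⨅ w : {w : Fin d → ℝ // enormR w = 1}, dotProduct w.1 (N.mulVec w.1)

/-- **Optimal noise excitation for a diagonal stable system.**
(i) Every PSD `Σ` with `trace(Σ) ≤ γ²` has
`λmin(Σ_{t<k} Λ^t·Σ·Λ^t) ≤ c := γ²/Σᵢ (1−λᵢ²)/(1−λᵢ^{2k})`; and
(ii) the diagonal `Σ*` with entries `c·(1−λⱼ²)/(1−λⱼ^{2k})` is PSD with trace `γ²` and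
achieves `Σ_{t<k} Λ^t·Σ*·Λ^t = c·I`. -/
theorem stmt12 {d : ℕ} (hd : 1 ≤ d) (k : ℕ) (hk : 1 ≤ k) (γ : ℝ) (hγ : 0 < γ)
    (lam : Fin d → ℝ) (hlam0 : ∀ i, 0 ≤ lam i) (hlam1 : ∀ i, lam i < 1) :
    (∀ Sig : Matrix (Fin d) (Fin d) ℝ, Sig.PosSemidef → Sig.trace ≤ γ ^ 2 →
      lamMinR (∑ t ∈ Finset.range k,
          (Matrix.diagonal lam) ^ t * Sig * (Matrix.diagonal lam) ^ t) ≤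
        γ ^ 2 / ∑ i, (1 - lam i ^ 2) / (1 - lam i ^ (2 * k))) ∧
    (Matrix.diagonal (fun j =>
        (γ ^ 2 / ∑ i, (1 - lam i ^ 2) / (1 - lam i ^ (2 * k))) *
          ((1 - lam j ^ 2) / (1 - lam j ^ (2 * k))))).PosSemidef ∧
    (Matrix.diagonal (fun j =>
        (γ ^ 2 / ∑ i, (1 - lam i ^ 2) / (1 - lam i ^ (2 * k))) *
          ((1 - lam j ^ 2) / (1 - lam j ^ (2 * k))))).trace = γ ^ 2 ∧
    (∑ t ∈ Finset.range k,
        (Matrix.diagonal lam) ^ t *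
          Matrix.diagonal (fun j =>
            (γ ^ 2 / ∑ i, (1 - lam i ^ 2) / (1 - lam i ^ (2 * k))) *
              ((1 - lam j ^ 2) / (1 - lam j ^ (2 * k)))) *
          (Matrix.diagonal lam) ^ t) =
      (γ ^ 2 / ∑ i, (1 - lam i ^ 2) / (1 - lam i ^ (2 * k))) •
        (1 : Matrix (Fin d) (Fin d) ℝ) := by
  classical
  have hdne : Nonempty (Fin d) := ⟨⟨0, hd⟩⟩
  set q : Fin d → ℝ := fun i => ∑ t ∈ Finset.range k, (lam i ^ 2) ^ t with hqdef
  have hx1 : ∀ i, lam i ^ 2 < 1 := fun i => by nlinarith [hlam0 i, hlam1 i]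
  have hqpos : ∀ i, 0 < q i := by
    intro i
    have h1 : ((lam i ^ 2) ^ 0 : ℝ) ≤ q i :=
      Finset.single_le_sum (f := fun t => ((lam i ^ 2) ^ t : ℝ))
        (fun t _ => pow_nonneg (sq_nonneg _) t) (Finset.mem_range.mpr hk)
    simpa using lt_of_lt_of_le one_pos (by simpa using h1)
  have hr : ∀ i, (1 - lam i ^ 2) / (1 - lam i ^ (2 * k)) = 1 / q i := by
    intro i
    have hne : (1 : ℝ) - lam i ^ 2 ≠ 0 := by have := hx1 i; intro h; linarith
    have hgeom : (1 : ℝ) - lam i ^ (2 * k) = (1 - lam i ^ 2) * q i := by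
      have h := geom_sum_mul (lam i ^ 2) k
      have h2k : lam i ^ (2 * k) = (lam i ^ 2) ^ k := by rw [pow_mul]
      rw [h2k]
      have : q i * (lam i ^ 2 - 1) = (lam i ^ 2) ^ k - 1 := h
      linarith [this]
    rw [hgeom, div_mul_eq_div_div, div_self hne]
  have hSsum : (∑ i, (1 - lam i ^ 2) / (1 - lam i ^ (2 * k))) = ∑ i, 1 / q i :=
    Finset.sum_congr rfl fun i _ => hr i
  have hSpos : 0 < ∑ i, (1 - lam i ^ 2) / (1 - lam i ^ (2 * k)) := by
    rw [hSsum]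
    exact Finset.sum_pos (fun i _ => one_div_pos.mpr (hqpos i)) Finset.univ_nonempty
  have hpow : ∀ (x : ℝ) (t : ℕ), x ^ t * x ^ t = (x ^ 2) ^ t := by
    intro x t
    rw [← pow_add, ← pow_mul, two_mul]
  set S : ℝ := ∑ i, (1 - lam i ^ 2) / (1 - lam i ^ (2 * k)) with hSdef
  have hcpos : 0 < γ ^ 2 / S := div_pos (by positivity) hSpos
  -- key computation for part (ii)
  have key : ∀ f : Fin d → ℝ,
      (∑ t ∈ Finset.range k,
        (Matrix.diagonal lam) ^ t * Matrix.diagonal f * (Matrix.diagonal lam) ^ t) =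
      Matrix.diagonal (fun j => q j * f j) := by
    intro f
    ext i j
    rw [Matrix.sum_apply]
    by_cases hij : i = j
    · subst hij
      rw [Matrix.diagonal_apply_eq]
      have hterm : ∀ t ∈ Finset.range k,
          ((Matrix.diagonal lam) ^ t * Matrix.diagonal f * (Matrix.diagonal lam) ^ t) i i
            = (lam i ^ 2) ^ t * f i := by
        intro t _
        rw [Matrix.diagonal_pow, Matrix.diagonal_mul_diagonal, Matrix.diagonal_mul_diagonal,
          Matrix.diagonal_apply_eq, Pi.pow_apply]
        calc lam i ^ t * f i * lam i ^ t = lam i ^ t * lam i ^ t * f i := by ring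
          _ = (lam i ^ 2) ^ t * f i := by rw [hpow]
      rw [Finset.sum_congr rfl hterm, ← Finset.sum_mul]
    · rw [Matrix.diagonal_apply_ne _ hij]
      refine Finset.sum_eq_zero fun t _ => ?_
      rw [Matrix.diagonal_pow, Matrix.diagonal_mul_diagonal, Matrix.diagonal_mul_diagonal,
        Matrix.diagonal_apply_ne _ hij]
  refine ⟨?_, ?_, ?_, ?_⟩
  · -- part (i)
    intro Sig hSig htr
    set M := ∑ t ∈ Finset.range k,
      (Matrix.diagonal lam) ^ t * Sig * (Matrix.diagonal lam) ^ t with hMdef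
    have hterm : ∀ t, ((Matrix.diagonal lam) ^ t * Sig * (Matrix.diagonal lam) ^ t).PosSemidef := by
      intro t
      have hΛt : ((Matrix.diagonal lam) ^ t)ᴴ = (Matrix.diagonal lam) ^ t := by
        rw [Matrix.diagonal_pow, Matrix.diagonal_conjTranspose]
        congr 1
      simpa [hΛt] using hSig.mul_mul_conjTranspose_same ((Matrix.diagonal lam) ^ t)
    have hMpsd : M.PosSemidef := by
      rw [hMdef]
      refine Finset.sum_induction _ _ (fun a b ha hb => ha.add hb) Matrix.PosSemidef.zero
        (fun t _ => hterm t)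
    have hbdd : BddBelow (Set.range fun w : {w : Fin d → ℝ // enormR w = 1} =>
        dotProduct w.1 (M.mulVec w.1)) := by
      refine ⟨0, ?_⟩
      rintro x ⟨w, rfl⟩
      simpa [star_trivial] using hMpsd.dotProduct_mulVec_nonneg w.1
    have hunit : ∀ j : Fin d, enormR (Pi.single j 1 : Fin d → ℝ) = 1 := by
      intro j
      have : (∑ i, ((Pi.single j 1 : Fin d → ℝ) i) ^ 2) = 1 := by
        rw [Finset.sum_eq_single j]
        · simp
        · intro b _ hb; simp [Pi.single_apply, hb]
        · simp
      rw [enormR, this, Real.sqrt_one]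
    have hentry : ∀ j, dotProduct (Pi.single j (1:ℝ))
        (M.mulVec (Pi.single j 1)) = q j * Sig j j := by
      intro j
      have h1 : dotProduct (Pi.single j (1:ℝ)) (M.mulVec (Pi.single j 1)) = M j j := by
        rw [Matrix.mulVec_single, single_dotProduct]
        simp
      rw [h1, hMdef, Matrix.sum_apply]
      have hterm2 : ∀ t ∈ Finset.range k,
          ((Matrix.diagonal lam) ^ t * Sig * (Matrix.diagonal lam) ^ t) j j
            = (lam j ^ 2) ^ t * Sig j j := by
        intro t _
        rw [Matrix.diagonal_pow, Matrix.mul_diagonal, Matrix.diagonal_mul, Pi.pow_apply]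
        calc lam j ^ t * Sig j j * lam j ^ t = lam j ^ t * lam j ^ t * Sig j j := by ring
          _ = (lam j ^ 2) ^ t * Sig j j := by rw [hpow]
      rw [Finset.sum_congr rfl hterm2, ← Finset.sum_mul]
    have hL : ∀ j, lamMinR M ≤ q j * Sig j j := by
      intro j
      have := ciInf_le hbdd ⟨Pi.single j 1, hunit j⟩
      rw [lamMinR]
      exact le_of_le_of_eq this (hentry j)
    rw [le_div_iff₀ hSpos, hSsum, Finset.mul_sum]
    calc (∑ i, lamMinR M * (1 / q i)) ≤ ∑ i, Sig i i := by
          refine Finset.sum_le_sum fun i _ => ?_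
          rw [mul_one_div, div_le_iff₀ (hqpos i)]
          exact le_of_le_of_eq (hL i) (mul_comm _ _)
      _ = Sig.trace := by rw [Matrix.trace]; rfl
      _ ≤ γ ^ 2 := htr
  · -- PSD
    refine Matrix.posSemidef_diagonal_iff.mpr fun j => ?_
    rw [hr j]
    exact le_of_lt (mul_pos hcpos (one_div_pos.mpr (hqpos j)))
  · -- trace
    rw [Matrix.trace_diagonal, ← Finset.mul_sum, ← hSdef]
    exact div_mul_cancel₀ _ (ne_of_gt hSpos)

  · -- achievability
    rw [key]
    ext i j
    rw [Matrix.smul_apply, Matrix.one_apply]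
    by_cases hij : i = j
    · subst hij
      rw [Matrix.diagonal_apply_eq, if_pos rfl, smul_eq_mul, mul_one, hr i]
      have hq0 : q i ≠ 0 := ne_of_gt (hqpos i)
      field_simp
    · rw [Matrix.diagonal_apply_ne _ hij, if_neg hij, smul_zero]
end
end

section
/- Let d, p ≥ 1 and k ≥ 1 be integers, let 𝓘 ⊆ {1,…,k}, and let ε ≥ 0. Let A and Â be d×d complex matrices with ‖A − Â‖₂ ≤ ε, let B be a d×p complex matrix, let U_ℓ ∈ ℂ^p for ℓ = 1,…,k, and let w ∈ ℂ^d. Assume that for every δ ∈ [0,ε], every d×d complex matrix Δ with ‖Δ‖₂ ≤ 1, and every ℓ ∈ 𝓘, the matrix e^{iθ_ℓ}·I − A − δ·Δ is invertible. Then |w^H·H_k(A,B,U,𝓘)·w − w^H·H_k(Â,B,U,𝓘)·w| ≤ ε·L(A,B,U,ε,𝓘,w). -/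
noncomputable section

open Matrix

/-- Euclidean norm of a complex vector. -/
def enormC {n : Type*} [Fintype n] (v : n → ℂ) : ℝ :=
  Real.sqrt (∑ i, ‖v i‖ ^ 2)

/-- Spectral norm (ℓ² → ℓ² operator norm) of a complex matrix. -/
def snormC {m n : Type*} [Fintype m] [Fintype n] (M : Matrix m n ℂ) : ℝ :=
  sSup {r : ℝ | ∃ v : n → ℂ, enormC v ≤ 1 ∧ r = enormC (M.mulVec v)}

/-- The frequency `θ_ℓ = 2πℓ/k`. -/
def freq (k ℓ : ℕ) : ℝ := 2 * Real.pi * ℓ / k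

/-- `E_ℓ = e^{iθ_ℓ}·I − A`. -/
def Emat {d : ℕ} (k : ℕ) (A : Matrix (Fin d) (Fin d) ℂ) (ℓ : ℕ) :
    Matrix (Fin d) (Fin d) ℂ :=
  Complex.exp ((freq k ℓ : ℂ) * Complex.I) • (1 : Matrix (Fin d) (Fin d) ℂ) - A

/-- `H_k(A,B,U,𝓘) = Σ_{ℓ∈𝓘} (e^{iθ_ℓ}I−A)⁻¹·B·U_ℓ·U_ℓ^H·B^H·((e^{iθ_ℓ}I−A)⁻¹)^H`. -/
def Hmat {d p : ℕ} (k : ℕ) (A : Matrix (Fin d) (Fin d) ℂ) (B : Matrix (Fin d) (Fin p) ℂ)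
    (U : ℕ → Fin p → ℂ) (Is : Finset ℕ) : Matrix (Fin d) (Fin d) ℂ :=
  ∑ ℓ ∈ Is,
    Matrix.vecMulVec (((Emat k A ℓ)⁻¹ * B).mulVec (U ℓ))
      (star (((Emat k A ℓ)⁻¹ * B).mulVec (U ℓ)))

/-- The quadratic form
`Σ_{ℓ∈𝓘} w^H·(E_ℓ−δΔ)⁻¹·Δ·(E_ℓ−δΔ)⁻¹·B·U_ℓ·U_ℓ^H·B^H·((E_ℓ−δΔ)⁻¹)^H·w`. -/
def Lquad {d p : ℕ} (k : ℕ) (A Δ : Matrix (Fin d) (Fin d) ℂ) (B : Matrix (Fin d) (Fin p) ℂ)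
    (U : ℕ → Fin p → ℂ) (Is : Finset ℕ) (w : Fin d → ℂ) (δ : ℝ) : ℂ :=
  ∑ ℓ ∈ Is,
    dotProduct (star w)
      (((Emat k A ℓ - (δ : ℂ) • Δ)⁻¹ * Δ * (Emat k A ℓ - (δ : ℂ) • Δ)⁻¹ * B *
          Matrix.vecMulVec (U ℓ) (star (U ℓ)) * Bᴴ *
          ((Emat k A ℓ - (δ : ℂ) • Δ)⁻¹)ᴴ).mulVec w)

/-- The smoothness functional `L(A,B,U,ε,𝓘,w)`: the supremum, over `δ ∈ [0,ε]` and `‖Δ‖₂ = 1`,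
of twice the modulus of the above quadratic form. -/
def Lsup {d p : ℕ} (k : ℕ) (A : Matrix (Fin d) (Fin d) ℂ) (B : Matrix (Fin d) (Fin p) ℂ)
    (U : ℕ → Fin p → ℂ) (ε : ℝ) (Is : Finset ℕ) (w : Fin d → ℂ) : ℝ :=
  sSup {r : ℝ | ∃ δ ∈ Set.Icc (0 : ℝ) ε, ∃ Δ : Matrix (Fin d) (Fin d) ℂ,
    snormC Δ = 1 ∧ r = 2 * ‖Lquad k A Δ B U Is w δ‖}

set_option maxHeartbeats 1000000

section AuxNorm
open scoped Matrix.Norms.L2Operator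

lemma enormC_eq {n : Type*} [Fintype n] (v : n → ℂ) :
    enormC v = ‖(WithLp.equiv 2 (n → ℂ)).symm v‖ := by
  rw [EuclideanSpace.norm_eq]
  simp [enormC]

lemma snormC_eq {m n : Type*} [Fintype m] [Fintype n] [DecidableEq n]
    (M : Matrix m n ℂ) : snormC M = ‖M‖ := by
  rw [Matrix.l2_opNorm_def]
  rw [← ContinuousLinearMap.sSup_unitClosedBall_eq_norm]
  refine congrArg sSup (Set.ext fun r => ?_)
  constructor
  · rintro ⟨v, hv, rfl⟩
    refine ⟨(WithLp.equiv 2 (n → ℂ)).symm v, ?_, ?_⟩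
    · rw [Metric.mem_closedBall, dist_zero_right, ← enormC_eq]; exact hv
    · simp only [LinearEquiv.trans_apply, LinearMap.coe_toContinuousLinearMap']
      rw [enormC_eq]; rfl
  · rintro ⟨x, hx, rfl⟩
    refine ⟨(WithLp.equiv 2 (n → ℂ)) x, ?_, ?_⟩
    · rw [enormC_eq]
      simpa using mem_closedBall_zero_iff.mp hx
    · rw [enormC_eq]
      simp only [LinearEquiv.trans_apply, LinearMap.coe_toContinuousLinearMap']
      rw [Matrix.toEuclideanLin_apply]
      rfl

end AuxNorm

section AuxAlg
variable {d p : ℕ}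

lemma lemA (C : Matrix (Fin d) (Fin p) ℂ) (u : Fin p → ℂ) :
    C * Matrix.vecMulVec u (star u) * Cᴴ
      = Matrix.vecMulVec (C.mulVec u) (star (C.mulVec u)) := by
  ext i j
  simp only [Matrix.mul_apply, Matrix.vecMulVec_apply, Matrix.conjTranspose_apply,
    Matrix.mulVec, dotProduct, Pi.star_apply, star_sum, star_mul',
    Finset.mul_sum, Finset.sum_mul]
  refine Finset.sum_congr rfl fun b _ => Finset.sum_congr rfl fun a _ => by ring

lemma lemB (w : Fin d → ℂ) (G : Matrix (Fin d) (Fin d) ℂ) :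
    star (dotProduct (star w) (G.mulVec w))
      = dotProduct (star w) (Gᴴ.mulVec w) := by
  simp only [dotProduct, Matrix.mulVec, Matrix.conjTranspose_apply, Pi.star_apply,
    star_sum, star_mul', Finset.mul_sum, star_star]
  rw [Finset.sum_comm]
  refine Finset.sum_congr rfl fun b _ => Finset.sum_congr rfl fun a _ => by ring

lemma lemV (u : Fin p → ℂ) :
    (Matrix.vecMulVec u (star u))ᴴ = Matrix.vecMulVec u (star u) := by
  ext i j
  simp only [Matrix.conjTranspose_apply, Matrix.vecMulVec_apply, Pi.star_apply, star_mul',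
    star_star]
  ring

/-- `w^H G w` as an `ℝ`-linear map in `G`. -/
def qlin (w : Fin d → ℂ) : Matrix (Fin d) (Fin d) ℂ →ₗ[ℝ] ℂ where
  toFun G := dotProduct (star w) (G.mulVec w)
  map_add' G1 G2 := by simp [Matrix.add_mulVec]
  map_smul' r G := by
    simp [Matrix.smul_mulVec, dotProduct_smul]

/-- conjugate transpose as an `ℝ`-linear map. -/
def ctlin : Matrix (Fin d) (Fin d) ℂ →ₗ[ℝ] Matrix (Fin d) (Fin d) ℂ where
  toFun G := Gᴴ
  map_add' G1 G2 := Matrix.conjTranspose_add _ _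
  map_smul' r G := by
    ext i j
    simp [Matrix.conjTranspose_apply, star_smul]

end AuxAlg

section AuxDeriv
open scoped Matrix.Norms.L2Operator
open Matrix Set

variable {d p : ℕ}

lemma hasDerivAt_phi (w : Fin d → ℂ) (Mc E Δ : Matrix (Fin d) (Fin d) ℂ) (t : ℝ)
    (hu : IsUnit (E - (t : ℂ) • Δ)) :
    HasDerivAt
      (fun t' : ℝ => dotProduct (star w)
        ((((E - (t' : ℂ) • Δ)⁻¹) * Mc * ((E - (t' : ℂ) • Δ)⁻¹)ᴴ).mulVec w))
      (dotProduct (star w)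
        (((E - (t : ℂ) • Δ)⁻¹ * Δ * (E - (t : ℂ) • Δ)⁻¹ * Mc * ((E - (t : ℂ) • Δ)⁻¹)ᴴ
          + (E - (t : ℂ) • Δ)⁻¹ * Mc *
            ((E - (t : ℂ) • Δ)⁻¹ * Δ * (E - (t : ℂ) • Δ)⁻¹)ᴴ).mulVec w)) t := by
  haveI : CompleteSpace (Matrix (Fin d) (Fin d) ℂ) := FiniteDimensional.complete ℂ _
  haveI : FiniteDimensional ℝ (Matrix (Fin d) (Fin d) ℂ) := Module.Finite.trans ℂ _
  set X : ℝ → Matrix (Fin d) (Fin d) ℂ := fun t' => E - (t' : ℂ) • Δ with hXdef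
  set R : Matrix (Fin d) (Fin d) ℂ := (E - (t : ℂ) • Δ)⁻¹ with hRdef
  have hX : HasDerivAt X (-Δ) t := by
    have h1 : HasDerivAt (fun t' : ℝ => (t' : ℂ) • Δ) Δ t := by
      have heq : (fun t' : ℝ => (t' : ℂ) • Δ) = fun t' : ℝ => t' • Δ := by
        funext t'; ext i j; simp [Complex.real_smul]
      rw [heq]
      simpa using (hasDerivAt_id t).smul_const Δ
    have h5 := (hasDerivAt_const t E).sub h1
    simp only [zero_sub] at h5
    exact h5
  have hcoe : (↑hu.unit⁻¹ : Matrix (Fin d) (Fin d) ℂ) = R := by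
    have h := Ring.inverse_unit hu.unit
    rw [hu.unit_spec] at h
    rw [hRdef, Matrix.nonsing_inv_eq_ringInverse]
    exact h.symm
  have hR : HasDerivAt (fun t' => Ring.inverse (X t')) (R * Δ * R) t := by
    have h2 := (hasFDerivAt_ringInverse (𝕜 := ℂ) hu.unit).restrictScalars ℝ
    have h3 := h2.comp_hasDerivAt t hX
    simp [Function.comp, ContinuousLinearMap.coe_restrictScalars',
      ContinuousLinearMap.mulLeftRight_apply, hcoe, Matrix.mul_assoc] at h3
    rw [Matrix.mul_assoc]
    exact h3
  have hRinv : HasDerivAt (fun t' => (X t')⁻¹) (R * Δ * R) t := by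
    simpa only [← Matrix.nonsing_inv_eq_ringInverse] using hR
  have hct : HasDerivAt (fun t' => ((X t')⁻¹)ᴴ) ((R * Δ * R)ᴴ) t := by
    have h4 := (LinearMap.toContinuousLinearMap
      (ctlin (d := d))).hasFDerivAt.comp_hasDerivAt t hRinv
    simp [ctlin, Function.comp, LinearMap.coe_toContinuousLinearMap] at h4
    rw [Matrix.conjTranspose_mul, Matrix.conjTranspose_mul]
    exact h4
  have hprod := (hRinv.mul_const Mc).mul hct
  have hq := (LinearMap.toContinuousLinearMap
    (qlin (d := d) w)).hasFDerivAt.comp_hasDerivAt t hprod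
  simp [qlin, Function.comp, LinearMap.coe_toContinuousLinearMap,
    Matrix.add_mulVec, dotProduct_add] at hq ⊢
  exact hq


section AuxMain
open scoped Matrix.Norms.L2Operator
open Matrix Set

theorem stmt13_aux {d p : ℕ} (hd : 1 ≤ d) (hp : 1 ≤ p) (k : ℕ) (hk : 1 ≤ k)
    (Is : Finset ℕ) (hIs : Is ⊆ Finset.Icc 1 k) (ε : ℝ) (hε : 0 ≤ ε)
    (A Ahat : Matrix (Fin d) (Fin d) ℂ) (hclose : snormC (A - Ahat) ≤ ε)
    (B : Matrix (Fin d) (Fin p) ℂ) (U : ℕ → Fin p → ℂ) (w : Fin d → ℂ)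
    (hinv : ∀ δ ∈ Set.Icc (0 : ℝ) ε, ∀ Δ : Matrix (Fin d) (Fin d) ℂ, snormC Δ ≤ 1 →
      ∀ ℓ ∈ Is, IsUnit (Emat k A ℓ - (δ : ℂ) • Δ)) :
    ‖(dotProduct (star w) ((Hmat k A B U Is).mulVec w) -
          dotProduct (star w) ((Hmat k Ahat B U Is).mulVec w))‖ ≤
      ε * Lsup k A B U ε Is w := by
  classical
  haveI : CompleteSpace (Matrix (Fin d) (Fin d) ℂ) := FiniteDimensional.complete ℂ _
  haveI : FiniteDimensional ℝ (Matrix (Fin d) (Fin d) ℂ) := Module.Finite.trans ℂ _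
  haveI : ProperSpace (Matrix (Fin d) (Fin d) ℂ) := FiniteDimensional.proper ℂ _
  set S : Set ℝ := {r : ℝ | ∃ δ ∈ Set.Icc (0 : ℝ) ε, ∃ Δ : Matrix (Fin d) (Fin d) ℂ,
    snormC Δ = 1 ∧ r = 2 * ‖Lquad k A Δ B U Is w δ‖} with hSdef
  have hLsup : Lsup k A B U ε Is w = sSup S := rfl
  have hSnonneg : ∀ r ∈ S, 0 ≤ r := by
    rintro r ⟨δ, hδ, Δ, hΔ, rfl⟩; positivity
  have hsup0 : 0 ≤ Lsup k A B U ε Is w := by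
    rw [hLsup]; exact Real.sSup_nonneg hSnonneg
  -- `S` is bounded above
  have hbddS : BddAbove S := by
    set K : Set (ℝ × Matrix (Fin d) (Fin d) ℂ) :=
      (Set.Icc (0 : ℝ) ε) ×ˢ (Metric.sphere 0 1) with hKdef
    have hK : IsCompact K := isCompact_Icc.prod (isCompact_sphere 0 1)
    have hq : Continuous (qlin (d := d) w) := LinearMap.continuous_of_finiteDimensional _
    have hcont : ContinuousOn
        (fun x : ℝ × Matrix (Fin d) (Fin d) ℂ =>
          2 * ‖Lquad k A x.2 B U Is w x.1‖) K := by
      refine continuousOn_const.mul (continuous_norm.comp_continuousOn ?_)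
      unfold Lquad
      refine continuousOn_finset_sum Is fun ℓ hℓ => ?_
      have hXi : Continuous (fun x : ℝ × Matrix (Fin d) (Fin d) ℂ =>
          Emat k A ℓ - (x.1 : ℂ) • x.2) :=
        continuous_const.sub ((Complex.continuous_ofReal.comp continuous_fst).smul
          continuous_snd)
      have hXinv : ContinuousOn (fun x : ℝ × Matrix (Fin d) (Fin d) ℂ =>
          (Emat k A ℓ - (x.1 : ℂ) • x.2)⁻¹) K := by
        simp only [Matrix.nonsing_inv_eq_ringInverse]
        intro x hx
        have hu : IsUnit (Emat k A ℓ - (x.1 : ℂ) • x.2) := by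
          refine hinv x.1 hx.1 x.2 ?_ ℓ hℓ
          rw [snormC_eq, mem_sphere_zero_iff_norm.mp hx.2]
        have hthis := (NormedRing.inverse_continuousAt hu.unit)
        rw [hu.unit_spec] at hthis
        have h5 : ContinuousAt (fun y : ℝ × Matrix (Fin d) (Fin d) ℂ =>
            Emat k A ℓ - (y.1 : ℂ) • y.2) x := hXi.continuousAt
        have h6 : ContinuousAt (fun y : ℝ × Matrix (Fin d) (Fin d) ℂ =>
            Ring.inverse (Emat k A ℓ - (y.1 : ℂ) • y.2)) x :=
          ContinuousAt.comp (f := fun y : ℝ × Matrix (Fin d) (Fin d) ℂ =>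
            Emat k A ℓ - (y.1 : ℂ) • y.2) hthis h5
        exact h6.continuousWithinAt
      have hct : ContinuousOn (fun x : ℝ × Matrix (Fin d) (Fin d) ℂ =>
          ((Emat k A ℓ - (x.1 : ℂ) • x.2)⁻¹)ᴴ) K := by
        have hc : Continuous (ctlin (d := d)) := LinearMap.continuous_of_finiteDimensional _
        exact hc.comp_continuousOn hXinv
      have hmat : ContinuousOn (fun x : ℝ × Matrix (Fin d) (Fin d) ℂ =>
          ((Emat k A ℓ - (x.1 : ℂ) • x.2)⁻¹ * x.2 * (Emat k A ℓ - (x.1 : ℂ) • x.2)⁻¹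
            * (B * Matrix.vecMulVec (U ℓ) (star (U ℓ)) * Bᴴ)
            * ((Emat k A ℓ - (x.1 : ℂ) • x.2)⁻¹)ᴴ)) K :=
        (((hXinv.mul continuous_snd.continuousOn).mul hXinv).mul continuousOn_const).mul hct
      have heq : (fun x : ℝ × Matrix (Fin d) (Fin d) ℂ =>
          dotProduct (star w)
            (((Emat k A ℓ - (x.1 : ℂ) • x.2)⁻¹ * x.2 * (Emat k A ℓ - (x.1 : ℂ) • x.2)⁻¹ * B *
              Matrix.vecMulVec (U ℓ) (star (U ℓ)) * Bᴴ *
              ((Emat k A ℓ - (x.1 : ℂ) • x.2)⁻¹)ᴴ).mulVec w))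
          = (fun x : ℝ × Matrix (Fin d) (Fin d) ℂ => qlin (d := d) w
            ((Emat k A ℓ - (x.1 : ℂ) • x.2)⁻¹ * x.2 * (Emat k A ℓ - (x.1 : ℂ) • x.2)⁻¹
              * (B * Matrix.vecMulVec (U ℓ) (star (U ℓ)) * Bᴴ)
              * ((Emat k A ℓ - (x.1 : ℂ) • x.2)⁻¹)ᴴ)) := by
        funext x
        simp [qlin, Matrix.mul_assoc]
      rw [heq]
      exact hq.comp_continuousOn hmat
    have himg := (hK.image_of_continuousOn hcont).bddAbove
    refine himg.mono ?_
    rintro r ⟨δ, hδ, Δ, hΔ, rfl⟩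
    exact ⟨(δ, Δ), ⟨hδ, mem_sphere_zero_iff_norm.mpr (by rw [← snormC_eq]; exact hΔ)⟩, rfl⟩
  -- the size of the perturbation
  have hs_eq : snormC (A - Ahat) = ‖A - Ahat‖ := snormC_eq _
  have hs0 : (0 : ℝ) ≤ snormC (A - Ahat) := hs_eq ▸ norm_nonneg _
  set s : ℝ := snormC (A - Ahat) with hsdef
  rcases eq_or_lt_of_le hs0 with h0 | hpos
  · -- `A = Ahat`
    have hAA : A = Ahat := by
      have h1 : ‖A - Ahat‖ = 0 := by rw [← hs_eq]; exact h0.symm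
      exact sub_eq_zero.mp (norm_eq_zero.mp h1)
    have hz : ‖(0 : ℂ)‖ = 0 := norm_zero
    have h2 : dotProduct (star w) ((Hmat k A B U Is).mulVec w) =
        dotProduct (star w) ((Hmat k Ahat B U Is).mulVec w) := by rw [hAA]
    rw [h2, sub_self, hz]
    exact mul_nonneg hε hsup0
  · -- main case
    set Δ0 : Matrix (Fin d) (Fin d) ℂ := ((s : ℂ))⁻¹ • (Ahat - A) with hΔ0
    have hsne : (s : ℂ) ≠ 0 := by exact_mod_cast hpos.ne'
    have hΔnorm : ‖Δ0‖ = 1 := by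
      rw [hΔ0, norm_smul, norm_inv, Complex.norm_real, Real.norm_of_nonneg hs0,
        norm_sub_rev Ahat A, ← hs_eq, inv_mul_cancel₀ hpos.ne']
    have hsnΔ : snormC Δ0 = 1 := by rw [snormC_eq]; exact hΔnorm
    have hsΔ : ∀ ℓ : ℕ, Emat k A ℓ - (s : ℂ) • Δ0 = Emat k Ahat ℓ := by
      intro ℓ
      rw [hΔ0, smul_smul, mul_inv_cancel₀ hsne, one_smul]
      unfold Emat
      abel
    have hsε : s ≤ ε := hclose
    have hunit : ∀ t ∈ Set.Icc (0 : ℝ) s, ∀ ℓ ∈ Is,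
        IsUnit (Emat k A ℓ - (t : ℂ) • Δ0) := fun t ht ℓ hℓ =>
      hinv t ⟨ht.1, ht.2.trans hsε⟩ Δ0 hsnΔ.le ℓ hℓ
    set f : ℝ → ℂ := fun t => ∑ ℓ ∈ Is, dotProduct (star w)
      ((((Emat k A ℓ - (t : ℂ) • Δ0)⁻¹ * (B * Matrix.vecMulVec (U ℓ) (star (U ℓ)) * Bᴴ) *
        ((Emat k A ℓ - (t : ℂ) • Δ0)⁻¹)ᴴ)).mulVec w) with hfdef
    have key : ∀ A' : Matrix (Fin d) (Fin d) ℂ,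
        dotProduct (star w) ((Hmat k A' B U Is).mulVec w)
          = ∑ ℓ ∈ Is, dotProduct (star w)
            (((Emat k A' ℓ)⁻¹ * (B * Matrix.vecMulVec (U ℓ) (star (U ℓ)) * Bᴴ) *
              ((Emat k A' ℓ)⁻¹)ᴴ).mulVec w) := by
      intro A'
      have h1 : dotProduct (star w) ((Hmat k A' B U Is).mulVec w)
          = qlin (d := d) w (Hmat k A' B U Is) := rfl
      rw [h1, Hmat, map_sum]
      refine Finset.sum_congr rfl fun ℓ _ => ?_
      have h2 : ∀ G : Matrix (Fin d) (Fin d) ℂ, qlin (d := d) w G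
          = dotProduct (star w) (G.mulVec w) := fun _ => rfl
      have h3 : (Emat k A' ℓ)⁻¹ * B * Matrix.vecMulVec (U ℓ) (star (U ℓ)) *
            ((Emat k A' ℓ)⁻¹ * B)ᴴ
          = (Emat k A' ℓ)⁻¹ * (B * Matrix.vecMulVec (U ℓ) (star (U ℓ)) * Bᴴ) *
            ((Emat k A' ℓ)⁻¹)ᴴ := by
        simp [Matrix.conjTranspose_mul, Matrix.mul_assoc]
      rw [h2, ← lemA ((Emat k A' ℓ)⁻¹ * B) (U ℓ), h3]
    have hf0 : f 0 = dotProduct (star w) ((Hmat k A B U Is).mulVec w) := by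
      rw [key]
      simp only [hfdef, Complex.ofReal_zero, zero_smul, sub_zero]
    have hfs : f s = dotProduct (star w) ((Hmat k Ahat B U Is).mulVec w) := by
      rw [key]
      simp only [hfdef, hsΔ]
    set g : ℝ → ℂ := fun t => Lquad k A Δ0 B U Is w t + star (Lquad k A Δ0 B U Is w t)
      with hgdef
    have hderiv : ∀ t ∈ Set.Icc (0 : ℝ) s, HasDerivAt f (g t) t := by
      intro t ht
      have hsum := HasDerivAt.sum (fun ℓ hℓ =>
        hasDerivAt_phi w (B * Matrix.vecMulVec (U ℓ) (star (U ℓ)) * Bᴴ) (Emat k A ℓ) Δ0 t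
          (hunit t ht ℓ hℓ))
      convert hsum using 1
      · rfl
      · funext t'; simp only [hfdef, Finset.sum_apply]
      simp only [hgdef, Lquad, star_sum]
      rw [← Finset.sum_add_distrib]
      refine Finset.sum_congr rfl fun ℓ hℓ => ?_
      rw [Matrix.add_mulVec, dotProduct_add]
      congr 1
      · show qlin (d := d) w _ = qlin (d := d) w _
        congr 1
        simp [Matrix.mul_assoc]
      · rw [lemB]
        show qlin (d := d) w _ = qlin (d := d) w _
        congr 1
        simp [Matrix.conjTranspose_mul, Matrix.mul_assoc, lemV]
    have hbound : ∀ t ∈ Set.Icc (0 : ℝ) s, ‖g t‖ ≤ Lsup k A B U ε Is w := by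
      intro t ht
      have hmem : 2 * ‖Lquad k A Δ0 B U Is w t‖ ∈ S :=
        ⟨t, ⟨ht.1, ht.2.trans hsε⟩, Δ0, hsnΔ, rfl⟩
      have h2 : ‖g t‖ ≤ 2 * ‖Lquad k A Δ0 B U Is w t‖ := by
        rw [hgdef]
        refine (norm_add_le _ _).trans ?_
        rw [norm_star]
        ring_nf
        exact le_refl _
      exact h2.trans (hLsup ▸ le_csSup hbddS hmem)
    have hMVT := Convex.norm_image_sub_le_of_norm_hasDerivWithin_le
      (fun t ht => (hderiv t ht).hasDerivWithinAt) hbound (convex_Icc 0 s)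
      (Set.left_mem_Icc.mpr hs0) (Set.right_mem_Icc.mpr hs0)
    rw [← hf0, ← hfs]
    have habs : ‖f 0 - f s‖ = ‖f s - f 0‖ := by
      rw [norm_sub_rev]
    rw [habs]
    calc ‖f s - f 0‖ ≤ Lsup k A B U ε Is w * ‖s - 0‖ := hMVT
      _ = Lsup k A B U ε Is w * s := by rw [sub_zero, Real.norm_of_nonneg hs0]
      _ ≤ Lsup k A B U ε Is w * ε := mul_le_mul_of_nonneg_left hsε hsup0
      _ = ε * Lsup k A B U ε Is w := mul_comm _ _

end AuxMain

/-- **Directional perturbation bound.**  If `‖A − Â‖₂ ≤ ε` and all perturbed resolvents on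
the relevant frequencies are invertible, then
`|w^H·H_k(A,B,U,𝓘)·w − w^H·H_k(Â,B,U,𝓘)·w| ≤ ε·L(A,B,U,ε,𝓘,w)`. -/
theorem stmt13 {d p : ℕ} (hd : 1 ≤ d) (hp : 1 ≤ p) (k : ℕ) (hk : 1 ≤ k)
    (Is : Finset ℕ) (hIs : Is ⊆ Finset.Icc 1 k) (ε : ℝ) (hε : 0 ≤ ε)
    (A Ahat : Matrix (Fin d) (Fin d) ℂ) (hclose : snormC (A - Ahat) ≤ ε)
    (B : Matrix (Fin d) (Fin p) ℂ) (U : ℕ → Fin p → ℂ) (w : Fin d → ℂ)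
    (hinv : ∀ δ ∈ Set.Icc (0 : ℝ) ε, ∀ Δ : Matrix (Fin d) (Fin d) ℂ, snormC Δ ≤ 1 →
      ∀ ℓ ∈ Is, IsUnit (Emat k A ℓ - (δ : ℂ) • Δ)) :
    ‖(dotProduct (star w) ((Hmat k A B U Is).mulVec w) -
          dotProduct (star w) ((Hmat k Ahat B U Is).mulVec w))‖ ≤
      ε * Lsup k A B U ε Is w := by
  exact stmt13_aux hd hp k hk Is hIs ε hε A Ahat hclose B U w hinv
end AuxDeriv
end
end

section
/- Let d, p ≥ 1, σ ≥ 0, γ > 0, let A be a d×d real matrix with spectral radius strictly less than 1, and let B be a d×p real matrix. For an integer k ≥ 1 define Γ_k := Σ_{s=0}^{k−1} A^s·(A^s)ᵀ and Ψ(k) := sup { λmin( σ²·Γ_k + (1/k²)·Σ_{ℓ=1}^k (e^{2πiℓ/k}·I − A)⁻¹·B·U_ℓ·U_ℓ^H·B^H·((e^{2πiℓ/k}·I − A)⁻¹)^H ) : U ∈ 𝒰_{γ²}(k) }. Then for every integer k₀ ≥ 1, the sequence i ↦ Ψ(k₀·2^i) converges to a finite limit, i.e. there exists c ∈ ℝ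 such that Ψ(k₀·2^i) → c as i → ∞. -/
noncomputable section

open Matrix

/-- Complexification of a real matrix. -/
def cmap {m n : Type*} (A : Matrix m n ℝ) : Matrix m n ℂ :=
  A.map ((↑) : ℝ → ℂ)

/-- Smallest eigenvalue of a Hermitian complex matrix, as the infimum of the quadratic form
over unit vectors. -/
def lamMin {d : ℕ} (N : Matrix (Fin d) (Fin d) ℂ) : ℝ :=
  ⨅ w : {w : Fin d → ℂ // enormC w = 1},
    (dotProduct (star w.1) (N.mulVec w.1)).re

/-- Feasible input spectra `𝒰_{γ²}(k)`: `U_ℓ` is the DFT of a real period-`k` signal,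
with total spectral power at most `k²·γ²`. -/
def Feas' (p k : ℕ) (γ : ℝ) (U : ℕ → Fin p → ℂ) : Prop :=
  (∃ u : ℕ → Fin p → ℝ,
      ∀ ℓ ∈ Finset.Icc 1 k, ∀ j, U ℓ j =
        ∑ t ∈ Finset.Icc 1 k,
          Complex.exp (-((freq k ℓ : ℂ) * (t : ℂ)) * Complex.I) * (u t j : ℝ)) ∧
  ∑ ℓ ∈ Finset.Icc 1 k, enormC (U ℓ) ^ 2 ≤ (k : ℝ) ^ 2 * γ ^ 2

/-- `Ψ(k)`: the optimal minimum eigenvalue of the expected covariates (noise plus input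
response) achievable by a period-`k` input of average power at most `γ²`. -/
def Psi {d p : ℕ} (A : Matrix (Fin d) (Fin d) ℝ) (B : Matrix (Fin d) (Fin p) ℝ)
    (σ γ : ℝ) (k : ℕ) : ℝ :=
  sSup {r : ℝ | ∃ U : ℕ → Fin p → ℂ, Feas' p k γ U ∧
    r = lamMin
      (σ ^ 2 • (∑ s ∈ Finset.range k, A ^ s * (A ^ s)ᵀ).map ((↑) : ℝ → ℂ) +
        ((k : ℝ) ^ 2)⁻¹ •
          ∑ ℓ ∈ Finset.Icc 1 k,
            Matrix.vecMulVec (((Emat k (cmap A) ℓ)⁻¹ * cmap B).mulVec (U ℓ))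
              (star (((Emat k (cmap A) ℓ)⁻¹ * cmap B).mulVec (U ℓ)))) }

open scoped ENNReal NNReal

namespace Stmt18

/-- quadratic form -/
def qf {d : ℕ} (N : Matrix (Fin d) (Fin d) ℂ) (w : Fin d → ℂ) : ℝ :=
  (dotProduct (star w) (N.mulVec w)).re

variable {d p : ℕ}

lemma enormC_sq {n : Type*} [Fintype n] (v : n → ℂ) :
    enormC v ^ 2 = ∑ i, ‖v i‖ ^ 2 := by
  rw [enormC, Real.sq_sqrt]; positivity

lemma lamMin_eq (N : Matrix (Fin d) (Fin d) ℂ) :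
    lamMin N = ⨅ w : {w : Fin d → ℂ // enormC w = 1}, qf N w.1 := rfl

lemma qf_add (N M : Matrix (Fin d) (Fin d) ℂ) (w : Fin d → ℂ) :
    qf (N + M) w = qf N w + qf M w := by
  simp [qf, Matrix.add_mulVec, dotProduct_add, Complex.add_re]

lemma qf_smul (c : ℝ) (N : Matrix (Fin d) (Fin d) ℂ) (w : Fin d → ℂ) :
    qf (c • N) w = c * qf N w := by
  have h : (c : ℂ) • N = c • N := by
    ext i j; simp [Complex.real_smul]
  rw [qf, ← h, Matrix.smul_mulVec, dotProduct_smul, smul_eq_mul,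
    Complex.re_ofReal_mul, qf]

lemma qf_sum {ι : Type*} (s : Finset ι) (f : ι → Matrix (Fin d) (Fin d) ℂ) (w : Fin d → ℂ) :
    qf (∑ x ∈ s, f x) w = ∑ x ∈ s, qf (f x) w := by
  classical
  induction s using Finset.induction with
  | empty => simp [qf, Matrix.zero_mulVec]
  | insert _ _ h ih => rw [Finset.sum_insert h, qf_add, ih, Finset.sum_insert h]

lemma vecMulVec_mulVec' (x y w : Fin d → ℂ) :
    (Matrix.vecMulVec x y).mulVec w = (dotProduct y w) • x := by
  ext i
  simp [Matrix.mulVec, Matrix.vecMulVec_apply, dotProduct, Finset.sum_mul,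
    Finset.mul_sum, mul_comm, mul_left_comm]

lemma qf_vecMulVec (x w : Fin d → ℂ) :
    qf (Matrix.vecMulVec x (star x)) w
      = Complex.normSq (dotProduct (star x) w) := by
  rw [qf, vecMulVec_mulVec', dotProduct_smul, smul_eq_mul]
  have h : dotProduct (star w) x = star (dotProduct (star x) w) := by
    simp [dotProduct, star_sum, mul_comm]
  rw [h, show (star (dotProduct (star x) w))
      = (starRingEnd ℂ) (dotProduct (star x) w) from rfl, Complex.mul_conj,
    Complex.ofReal_re]

lemma qf_gram (C : Matrix (Fin d) (Fin d) ℂ) (w : Fin d → ℂ) :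
    qf (C * Cᴴ) w = ∑ i, Complex.normSq ((Cᴴ.mulVec w) i) := by
  have h1 : dotProduct (star w) ((C * Cᴴ).mulVec w)
      = dotProduct (star (Cᴴ.mulVec w)) (Cᴴ.mulVec w) := by
    rw [← Matrix.mulVec_mulVec, Matrix.dotProduct_mulVec, Matrix.star_mulVec,
      Matrix.conjTranspose_conjTranspose]
  rw [qf, h1, dotProduct, Complex.re_sum]
  refine Finset.sum_congr rfl fun i _ => ?_
  simp only [Pi.star_apply]
  rw [show (star ((Cᴴ.mulVec w) i)) = (starRingEnd ℂ) ((Cᴴ.mulVec w) i) from rfl]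
  rw [mul_comm, Complex.mul_conj, Complex.ofReal_re]


lemma cmap_transpose (M : Matrix (Fin d) (Fin d) ℝ) : (cmap M)ᴴ = cmap Mᵀ := by
  ext i j
  simp [cmap, Matrix.conjTranspose_apply, Matrix.map_apply, Complex.conj_ofReal]

lemma cmap_mul (M N : Matrix (Fin d) (Fin d) ℝ) : cmap (M * N) = cmap M * cmap N := by
  ext i j
  simp [cmap, Matrix.mul_apply, Matrix.map_apply]

lemma cmap_sum {ι : Type*} (s : Finset ι) (f : ι → Matrix (Fin d) (Fin d) ℝ) :
    cmap (∑ x ∈ s, f x) = ∑ x ∈ s, cmap (f x) := by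
  ext i j
  simp [cmap, Matrix.map_apply, Matrix.sum_apply]

lemma qf_cmap_gram (M : Matrix (Fin d) (Fin d) ℝ) (w : Fin d → ℂ) :
    qf (cmap (M * Mᵀ)) w = ∑ i, Complex.normSq (((cmap M)ᴴ.mulVec w) i) := by
  rw [cmap_mul, ← cmap_transpose, qf_gram]

lemma qf_cmap_gram_nonneg (M : Matrix (Fin d) (Fin d) ℝ) (w : Fin d → ℂ) :
    0 ≤ qf (cmap (M * Mᵀ)) w := by
  rw [qf_cmap_gram]
  exact Finset.sum_nonneg fun i _ => Complex.normSq_nonneg _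

/-- The matrix appearing inside `Psi`. -/
def Nk (A : Matrix (Fin d) (Fin d) ℝ) (B : Matrix (Fin d) (Fin p) ℝ) (σ : ℝ) (k : ℕ)
    (U : ℕ → Fin p → ℂ) : Matrix (Fin d) (Fin d) ℂ :=
  σ ^ 2 • (∑ s ∈ Finset.range k, A ^ s * (A ^ s)ᵀ).map ((↑) : ℝ → ℂ) +
    ((k : ℝ) ^ 2)⁻¹ •
      ∑ ℓ ∈ Finset.Icc 1 k,
        Matrix.vecMulVec (((Emat k (cmap A) ℓ)⁻¹ * cmap B).mulVec (U ℓ))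
          (star (((Emat k (cmap A) ℓ)⁻¹ * cmap B).mulVec (U ℓ)))

lemma qf_Nk (A : Matrix (Fin d) (Fin d) ℝ) (B : Matrix (Fin d) (Fin p) ℝ) (σ : ℝ) (k : ℕ)
    (U : ℕ → Fin p → ℂ) (w : Fin d → ℂ) :
    qf (Nk A B σ k U) w =
      σ ^ 2 * ∑ s ∈ Finset.range k, ∑ i, Complex.normSq (((cmap (A ^ s))ᴴ.mulVec w) i) +
      ((k : ℝ) ^ 2)⁻¹ * ∑ ℓ ∈ Finset.Icc 1 k,
        Complex.normSq (dotProduct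
          (star (((Emat k (cmap A) ℓ)⁻¹ * cmap B).mulVec (U ℓ))) w) := by
  rw [Nk, qf_add, qf_smul, qf_smul, qf_sum]
  congr 1
  · have h0 : (∑ s ∈ Finset.range k, A ^ s * (A ^ s)ᵀ).map ((↑) : ℝ → ℂ)
        = ∑ s ∈ Finset.range k, cmap (A ^ s * (A ^ s)ᵀ) := cmap_sum _ _
    rw [h0, qf_sum]
    congr 1
    exact Finset.sum_congr rfl fun s _ => qf_cmap_gram _ _
  · congr 1
    exact Finset.sum_congr rfl fun ℓ _ => qf_vecMulVec _ _

lemma qf_Nk_nonneg (A : Matrix (Fin d) (Fin d) ℝ) (B : Matrix (Fin d) (Fin p) ℝ) (σ : ℝ)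
    (k : ℕ) (U : ℕ → Fin p → ℂ) (w : Fin d → ℂ) : 0 ≤ qf (Nk A B σ k U) w := by
  rw [qf_Nk]
  apply add_nonneg
  · exact mul_nonneg (sq_nonneg σ) (Finset.sum_nonneg fun s _ =>
      Finset.sum_nonneg fun i _ => Complex.normSq_nonneg _)
  · exact mul_nonneg (inv_nonneg.2 (sq_nonneg _))
      (Finset.sum_nonneg fun ℓ _ => Complex.normSq_nonneg _)


def e0 (hd : 1 ≤ d) : Fin d → ℂ := Pi.single ⟨0, hd⟩ 1

lemma enormC_e0 (hd : 1 ≤ d) : enormC (e0 hd) = 1 := by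
  rw [enormC]
  have h : ∑ i, ‖e0 hd i‖ ^ 2 = 1 := by
    rw [e0]
    rw [Finset.sum_eq_single (⟨0, hd⟩ : Fin d)]
    · simp
    · intro b _ hb; simp [Pi.single_apply, hb]
    · simp
  rw [h, Real.sqrt_one]

lemma lamMin_le_qf {N : Matrix (Fin d) (Fin d) ℂ} (h0 : ∀ w, 0 ≤ qf N w)
    {w : Fin d → ℂ} (hw : enormC w = 1) : lamMin N ≤ qf N w :=
  ciInf_le ⟨0, by rintro r ⟨v, rfl⟩; exact h0 _⟩ (⟨w, hw⟩ : {w : Fin d → ℂ // enormC w = 1})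

lemma lamMin_nonneg (hd : 1 ≤ d) {N : Matrix (Fin d) (Fin d) ℂ}
    (h0 : ∀ w, 0 ≤ qf N w) : 0 ≤ lamMin N := by
  haveI : Nonempty {w : Fin d → ℂ // enormC w = 1} := ⟨⟨e0 hd, enormC_e0 hd⟩⟩
  exact le_ciInf fun w => h0 w.1

lemma lamMin_mono (hd : 1 ≤ d) {N M : Matrix (Fin d) (Fin d) ℂ}
    (h0 : ∀ w, 0 ≤ qf N w) (h : ∀ w, enormC w = 1 → qf N w ≤ qf M w) :
    lamMin N ≤ lamMin M := by
  haveI : Nonempty {w : Fin d → ℂ // enormC w = 1} := ⟨⟨e0 hd, enormC_e0 hd⟩⟩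
  exact le_ciInf fun w => (lamMin_le_qf h0 w.2).trans (h w.1 w.2)


lemma freq_mul_base {k : ℕ} (hk : 1 ≤ k) (ℓ : ℕ) :
    freq (2*k) ℓ * k = Real.pi * ℓ := by
  have hk' : (k:ℝ) ≠ 0 := Nat.cast_ne_zero.2 (by omega)
  rw [freq]; push_cast; field_simp

lemma freq_double {k m : ℕ} (hk : 1 ≤ k) : freq (2*k) (2*m) = freq k m := by
  have hk' : (k:ℝ) ≠ 0 := Nat.cast_ne_zero.2 (by omega)
  rw [freq, freq]; push_cast; field_simp

lemma exp_neg_pi_nat (ℓ : ℕ) :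
    Complex.exp (-((Real.pi : ℂ) * ℓ) * Complex.I) = (-1)^ℓ := by
  rw [show -((Real.pi:ℂ) * ℓ) * Complex.I = ℓ * (-(Real.pi * Complex.I)) by ring,
    Complex.exp_nat_mul, Complex.exp_neg, Complex.exp_pi_mul_I]
  norm_num

lemma sum_Icc_double {M : Type*} [AddCommMonoid M] (k : ℕ) (g : ℕ → M) :
    ∑ t ∈ Finset.Icc 1 (2*k), g t
      = ∑ t ∈ Finset.Icc 1 k, g t + ∑ t ∈ Finset.Icc 1 k, g (t + k) := by
  rw [show Finset.Icc 1 (2*k) = Finset.Ioc 0 (2*k) from Finset.Icc_add_one_left_eq_Ioc 0 (2*k),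
    show Finset.Icc 1 k = Finset.Ioc 0 k from Finset.Icc_add_one_left_eq_Ioc 0 k,
    ← Finset.sum_Ioc_consecutive g (Nat.zero_le k) (by omega : k ≤ 2*k)]
  congr 1
  refine (Finset.sum_bij' (fun t _ => t + k) (fun t _ => t - k) ?_ ?_ ?_ ?_ ?_).symm
  · intro a ha; simp only [Finset.mem_Ioc] at ha ⊢; omega
  · intro a ha; simp only [Finset.mem_Ioc] at ha ⊢; omega
  · intro a ha; simp only [Finset.mem_Ioc] at ha; omega
  · intro a ha; simp only [Finset.mem_Ioc] at ha; omega
  · intro a _; rfl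

/-- The doubled-period signal. -/
def udouble (k : ℕ) (u : ℕ → Fin p → ℝ) : ℕ → Fin p → ℝ :=
  fun t => if t ≤ k then u t else u (t - k)

lemma Uprime_decomp {k : ℕ} (hk : 1 ≤ k) (u : ℕ → Fin p → ℝ) (ℓ : ℕ) (j : Fin p) :
    (∑ t ∈ Finset.Icc 1 (2*k),
        Complex.exp (-((freq (2*k) ℓ : ℂ) * (t:ℂ)) * Complex.I) * ((udouble k u t j : ℝ)))
      = (1 + (-1)^ℓ) *
        ∑ t ∈ Finset.Icc 1 k,
          Complex.exp (-((freq (2*k) ℓ : ℂ) * (t:ℂ)) * Complex.I) * (u t j : ℝ) := by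
  rw [sum_Icc_double]
  have h1 : ∀ t ∈ Finset.Icc 1 k,
      Complex.exp (-((freq (2*k) ℓ : ℂ) * (t:ℂ)) * Complex.I) * ((udouble k u t j : ℝ))
        = Complex.exp (-((freq (2*k) ℓ : ℂ) * (t:ℂ)) * Complex.I) * (u t j : ℝ) := by
    intro t ht
    simp only [Finset.mem_Icc] at ht
    rw [udouble, if_pos ht.2]
  have h2 : ∀ t ∈ Finset.Icc 1 k,
      Complex.exp (-((freq (2*k) ℓ : ℂ) * ((t+k : ℕ):ℂ)) * Complex.I) * ((udouble k u (t+k) j : ℝ))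
        = (-1)^ℓ * (Complex.exp (-((freq (2*k) ℓ : ℂ) * (t:ℂ)) * Complex.I) * (u t j : ℝ)) := by
    intro t ht
    simp only [Finset.mem_Icc] at ht
    have hu : udouble k u (t+k) = u t := by
      have harg : t + k - k = t := by omega
      rw [udouble, if_neg (by omega), harg]
    rw [hu]
    have hexp : Complex.exp (-((freq (2*k) ℓ : ℂ) * ((t+k : ℕ):ℂ)) * Complex.I)
        = Complex.exp (-((freq (2*k) ℓ : ℂ) * (t:ℂ)) * Complex.I) * (-1)^ℓ := by
      have hfm : ((freq (2*k) ℓ : ℂ)) * (k:ℂ) = (Real.pi:ℂ) * (ℓ:ℂ) := by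
        have := freq_mul_base hk ℓ
        push_cast
        rw [show ((freq (2*k) ℓ : ℝ):ℂ) * (k:ℂ) = ((freq (2*k) ℓ * k : ℝ):ℂ) by push_cast; ring,
          this]
        push_cast; ring
      rw [show -((freq (2*k) ℓ : ℂ) * ((t+k : ℕ):ℂ)) * Complex.I
          = -((freq (2*k) ℓ : ℂ) * (t:ℂ)) * Complex.I +
            -((freq (2*k) ℓ : ℂ) * (k:ℂ)) * Complex.I by push_cast; ring,
        Complex.exp_add, hfm, exp_neg_pi_nat]
    rw [hexp]; ring
  rw [Finset.sum_congr rfl h1, Finset.sum_congr rfl h2, ← Finset.mul_sum]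
  ring


lemma sum_even_odd {M : Type*} [AddCommMonoid M] (k : ℕ) (f : ℕ → M)
    (hodd : ∀ m : ℕ, f (2*m+1) = 0) :
    ∑ ℓ ∈ Finset.Icc 1 (2*k), f ℓ = ∑ m ∈ Finset.Icc 1 k, f (2*m) := by
  classical
  have hsub : (Finset.Icc 1 k).image (fun m => 2*m) ⊆ Finset.Icc 1 (2*k) := by
    intro x hx
    simp only [Finset.mem_image, Finset.mem_Icc] at hx ⊢
    obtain ⟨m, hm, rfl⟩ := hx; omega
  have himg : ∑ x ∈ (Finset.Icc 1 k).image (fun m => 2*m), f x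
      = ∑ m ∈ Finset.Icc 1 k, f (2*m) :=
    Finset.sum_image (fun x _ y _ h => by omega)
  rw [← himg]
  refine (Finset.sum_subset hsub ?_).symm
  intro x hx hnx
  simp only [Finset.mem_Icc] at hx
  rcases Nat.even_or_odd x with ⟨m, rfl⟩ | ⟨m, rfl⟩
  · exfalso
    apply hnx
    simp only [Finset.mem_image, Finset.mem_Icc]
    exact ⟨m, by omega, by omega⟩
  · exact hodd m

lemma feas_double {k : ℕ} (hk : 1 ≤ k) {γ : ℝ} (U : ℕ → Fin p → ℂ)
    (h : Feas' p k γ U) :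
    ∃ U' : ℕ → Fin p → ℂ, Feas' p (2*k) γ U' ∧
      (∀ m ∈ Finset.Icc 1 k, ∀ j, U' (2*m) j = 2 * U m j) ∧
      (∀ m : ℕ, ∀ j, U' (2*m+1) j = 0) := by
  obtain ⟨⟨u, hu⟩, hpow⟩ := h
  set U' : ℕ → Fin p → ℂ := fun ℓ j => ∑ t ∈ Finset.Icc 1 (2*k),
      Complex.exp (-((freq (2*k) ℓ : ℂ) * (t:ℂ)) * Complex.I) * ((udouble k u t j : ℝ))
    with hU'
  have heven : ∀ m ∈ Finset.Icc 1 k, ∀ j, U' (2*m) j = 2 * U m j := by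
    intro m hm j
    rw [hU']
    dsimp only
    rw [Uprime_decomp hk u (2*m) j]
    have h1 : ((-1:ℂ))^(2*m) = 1 := by
      rw [pow_mul]; norm_num
    rw [h1]
    have h2 : ∀ t ∈ Finset.Icc 1 k,
        Complex.exp (-((freq (2*k) (2*m) : ℂ) * (t:ℂ)) * Complex.I) * (u t j : ℝ)
          = Complex.exp (-((freq k m : ℂ) * (t:ℂ)) * Complex.I) * (u t j : ℝ) := by
      intro t _
      rw [freq_double hk]
    rw [Finset.sum_congr rfl h2, ← hu m hm j]
    norm_num
  have hoddv : ∀ m : ℕ, ∀ j, U' (2*m+1) j = 0 := by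
    intro m j
    rw [hU']
    dsimp only
    rw [Uprime_decomp hk u (2*m+1) j]
    have h1 : ((-1:ℂ))^(2*m+1) = -1 := by
      rw [pow_succ, pow_mul]; norm_num
    rw [h1]
    norm_num
  refine ⟨U', ⟨⟨udouble k u, fun ℓ _ j => rfl⟩, ?_⟩, heven, hoddv⟩
  have hz : ∀ m : ℕ, enormC (U' (2*m+1)) ^ 2 = 0 := by
    intro m
    have : U' (2*m+1) = fun _ => 0 := funext fun j => hoddv m j
    rw [this]
    simp [enormC]
  rw [sum_even_odd k (fun ℓ => enormC (U' ℓ) ^ 2) hz]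
  have h4 : ∀ m ∈ Finset.Icc 1 k, enormC (U' (2*m)) ^ 2 = 4 * enormC (U m) ^ 2 := by
    intro m hm
    rw [enormC_sq, enormC_sq, Finset.mul_sum]
    refine Finset.sum_congr rfl fun j _ => ?_
    rw [heven m hm j, norm_mul, mul_pow, Complex.norm_two]
    ring
  rw [Finset.sum_congr rfl h4, ← Finset.mul_sum]
  have : (((2*k : ℕ)):ℝ)^2 * γ^2 = 4 * ((k:ℝ)^2 * γ^2) := by push_cast; ring
  rw [this]
  nlinarith [hpow]


lemma lamMin_Nk_le_double (hd : 1 ≤ d) {k : ℕ} (hk : 1 ≤ k)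
    (A : Matrix (Fin d) (Fin d) ℝ) (B : Matrix (Fin d) (Fin p) ℝ) (σ : ℝ)
    {U U' : ℕ → Fin p → ℂ}
    (heven : ∀ m ∈ Finset.Icc 1 k, ∀ j, U' (2*m) j = 2 * U m j)
    (hoddv : ∀ m : ℕ, ∀ j, U' (2*m+1) j = 0) :
    lamMin (Nk A B σ k U) ≤ lamMin (Nk A B σ (2*k) U') := by
  refine lamMin_mono hd (qf_Nk_nonneg A B σ k U) fun w _ => ?_
  rw [qf_Nk, qf_Nk]
  have hterm1 : σ ^ 2 * ∑ s ∈ Finset.range k, ∑ i, Complex.normSq (((cmap (A ^ s))ᴴ.mulVec w) i)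
      ≤ σ ^ 2 * ∑ s ∈ Finset.range (2*k), ∑ i, Complex.normSq (((cmap (A ^ s))ᴴ.mulVec w) i) := by
    apply mul_le_mul_of_nonneg_left _ (sq_nonneg σ)
    apply Finset.sum_le_sum_of_subset_of_nonneg (Finset.range_subset_range.2 (by omega))
    intro s _ _
    exact Finset.sum_nonneg fun i _ => Complex.normSq_nonneg _
  have hterm2 : (((2*k : ℕ) : ℝ) ^ 2)⁻¹ * ∑ ℓ ∈ Finset.Icc 1 (2*k),
        Complex.normSq (dotProduct
          (star (((Emat (2*k) (cmap A) ℓ)⁻¹ * cmap B).mulVec (U' ℓ))) w)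
      = ((k : ℝ) ^ 2)⁻¹ * ∑ ℓ ∈ Finset.Icc 1 k,
        Complex.normSq (dotProduct
          (star (((Emat k (cmap A) ℓ)⁻¹ * cmap B).mulVec (U ℓ))) w) := by
    have hz : ∀ m : ℕ, Complex.normSq (dotProduct
        (star (((Emat (2*k) (cmap A) (2*m+1))⁻¹ * cmap B).mulVec (U' (2*m+1)))) w) = 0 := by
      intro m
      have h0 : U' (2*m+1) = 0 := funext fun j => hoddv m j
      rw [h0, Matrix.mulVec_zero]
      simp
    rw [sum_even_odd k _ hz]
    have hterm : ∀ m ∈ Finset.Icc 1 k,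
        Complex.normSq (dotProduct
          (star (((Emat (2*k) (cmap A) (2*m))⁻¹ * cmap B).mulVec (U' (2*m)))) w)
        = 4 * Complex.normSq (dotProduct
          (star (((Emat k (cmap A) m)⁻¹ * cmap B).mulVec (U m))) w) := by
      intro m hm
      have hE : Emat (2*k) (cmap A) (2*m) = Emat k (cmap A) m := by
        rw [Emat, Emat, freq_double hk]
      have hU2 : U' (2*m) = (2:ℂ) • U m := by
        funext j
        rw [heven m hm j, Pi.smul_apply, smul_eq_mul]
      rw [hE, hU2, Matrix.mulVec_smul, star_smul, smul_dotProduct]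
      rw [show (star (2:ℂ)) = (2:ℂ) from by norm_num, smul_eq_mul,
        Complex.normSq_mul]
      norm_num [Complex.normSq]
    rw [Finset.sum_congr rfl hterm, ← Finset.mul_sum]
    have hk' : ((k:ℝ))^2 ≠ 0 := by
      have : (k:ℝ) ≠ 0 := Nat.cast_ne_zero.2 (by omega)
      positivity
    have hcast : (((2*k : ℕ) : ℝ) ^ 2)⁻¹ * 4 = ((k : ℝ) ^ 2)⁻¹ := by
      push_cast
      field_simp
      ring
    rw [← mul_assoc, hcast]
  rw [hterm2]
  exact add_le_add_left hterm1 _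


lemma cmap_one : cmap (1 : Matrix (Fin d) (Fin d) ℝ) = 1 := by
  ext i j
  simp [cmap, Matrix.map_apply, Matrix.one_apply, apply_ite]

lemma cmap_pow (A : Matrix (Fin d) (Fin d) ℝ) (s : ℕ) : cmap (A ^ s) = (cmap A) ^ s := by
  induction s with
  | zero => simpa using cmap_one
  | succ n ih => rw [pow_succ, pow_succ, cmap_mul, ih]

section Frob

attribute [local instance] Matrix.frobeniusSeminormedAddCommGroup
  Matrix.frobeniusNormedAddCommGroup Matrix.frobeniusNormedRing
  Matrix.frobeniusNormedSpace Matrix.frobeniusNormedAlgebra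

lemma frob_sq (M : Matrix (Fin d) (Fin d) ℂ) :
    ∑ i, ∑ j, Complex.normSq (M i j) = ‖M‖ ^ 2 := by
  rw [Matrix.frobenius_norm_def, ← Real.rpow_natCast _ 2, ← Real.rpow_mul (by positivity)]
  norm_num
  simp [Complex.sq_norm]

lemma exists_powsum_bound (hd : 1 ≤ d) (A : Matrix (Fin d) (Fin d) ℝ)
    (hρ : ∀ μ ∈ spectrum ℂ (cmap A), ‖μ‖ < 1) :
    ∃ S : ℝ, 0 ≤ S ∧ ∀ k : ℕ,
      ∑ s ∈ Finset.range k, ∑ i, ∑ j, Complex.normSq (((cmap A) ^ s) i j) ≤ S := by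
  haveI : Nonempty (Fin d) := ⟨⟨0, hd⟩⟩
  haveI hnt : Nontrivial (Matrix (Fin d) (Fin d) ℂ) := by
    refine ⟨0, 1, fun h => ?_⟩
    have h2 := congrFun (congrFun h ⟨0, hd⟩) ⟨0, hd⟩
    rw [Matrix.zero_apply, Matrix.one_apply_eq] at h2
    exact zero_ne_one h2
  haveI : CompleteSpace (Matrix (Fin d) (Fin d) ℂ) :=
    FiniteDimensional.complete ℂ _
  set a := cmap A with ha
  have hrad : spectralRadius ℂ a < 1 := by
    have h1 : ∀ z ∈ spectrum ℂ a, ‖z‖₊ < (1 : ℝ≥0) := by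
      intro z hz
      have := hρ z hz
      rw [← NNReal.coe_lt_coe]
      simpa using this
    simpa using spectrum.spectralRadius_lt_of_forall_lt a h1
  obtain ⟨r, hr1, hr2⟩ := ENNReal.lt_iff_exists_nnreal_btwn.1 hrad
  have hgel := spectrum.pow_nnnorm_pow_one_div_tendsto_nhds_spectralRadius a
  have hev : ∀ᶠ n : ℕ in Filter.atTop, (‖a ^ n‖₊ : ℝ≥0∞) ^ (1 / (n:ℝ)) < (r : ℝ≥0∞) :=
    hgel.eventually_lt_const hr1
  obtain ⟨N, hN⟩ := Filter.eventually_atTop.1 hev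
  set N₀ := max N 1 with hN₀
  have hbound : ∀ n ≥ N₀, ‖a ^ n‖ ≤ (r : ℝ) ^ n := by
    intro n hn
    have hn1 : 1 ≤ n := le_trans (le_max_right N 1) hn
    have h1 := hN n (le_trans (le_max_left N 1) hn)
    have h2 : ((‖a ^ n‖₊ : ℝ≥0∞) ^ (1 / (n:ℝ))) ^ (n : ℝ) < ((r : ℝ≥0∞)) ^ (n : ℝ) :=
      ENNReal.rpow_lt_rpow h1 (by positivity)
    rw [← ENNReal.rpow_mul, one_div, inv_mul_cancel₀ (by positivity : (n:ℝ) ≠ 0),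
      ENNReal.rpow_one] at h2
    rw [ENNReal.rpow_natCast, ← ENNReal.coe_pow, ENNReal.coe_lt_coe] at h2
    have := le_of_lt h2
    rw [← NNReal.coe_le_coe] at this
    simpa using this
  have hrlt : (r : ℝ) < 1 := by
    have := ENNReal.coe_lt_coe.1 (by simpa using hr2)
    exact_mod_cast this
  have hr0 : (0:ℝ) ≤ (r:ℝ) := r.coe_nonneg
  set q : ℝ := (r:ℝ) ^ 2 with hq
  have hq1 : q < 1 := by nlinarith
  have hq0 : 0 ≤ q := by positivity
  have hsum : Summable (fun n : ℕ => ‖a ^ n‖ ^ 2) := by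
    rw [← summable_nat_add_iff N₀]
    have hgsum : Summable (fun n : ℕ => q ^ N₀ * q ^ n) :=
      (summable_geometric_of_lt_one hq0 hq1).mul_left _
    have hle : ∀ n : ℕ, ‖a ^ (n + N₀)‖ ^ 2 ≤ q ^ N₀ * q ^ n := by
      intro n
      have hb := hbound (n + N₀) (by omega)
      have h1 : ‖a ^ (n + N₀)‖ ^ 2 ≤ ((r:ℝ) ^ (n + N₀)) ^ 2 := by
        have h0 : (0:ℝ) ≤ ‖a ^ (n + N₀)‖ := norm_nonneg _
        nlinarith
      calc ‖a ^ (n + N₀)‖ ^ 2 ≤ ((r:ℝ) ^ (n + N₀)) ^ 2 := h1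
        _ = q ^ N₀ * q ^ n := by
            simp only [hq, ← pow_mul, ← pow_add]
            congr 1
            ring
    exact Summable.of_nonneg_of_le (fun n => by positivity) hle hgsum
  refine ⟨∑' n, ‖a ^ n‖ ^ 2, tsum_nonneg fun n => by positivity, fun k => ?_⟩
  have h1 : ∀ s ∈ Finset.range k, ∑ i, ∑ j, Complex.normSq ((a ^ s) i j) = ‖a ^ s‖ ^ 2 :=
    fun s _ => frob_sq _
  rw [Finset.sum_congr rfl h1]
  exact Summable.sum_le_tsum _ (fun n _ => by positivity) hsum

end Frob


/-- The continuous circle matrix function. -/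
def Ecirc (A : Matrix (Fin d) (Fin d) ℝ) (θ : ℝ) : Matrix (Fin d) (Fin d) ℂ :=
  Complex.exp ((θ:ℂ) * Complex.I) • (1 : Matrix (Fin d) (Fin d) ℂ) - cmap A

lemma Emat_eq_Ecirc (A : Matrix (Fin d) (Fin d) ℝ) (k ℓ : ℕ) :
    Emat k (cmap A) ℓ = Ecirc A (freq k ℓ) := rfl

lemma Ecirc_isUnit (A : Matrix (Fin d) (Fin d) ℝ)
    (hρ : ∀ μ ∈ spectrum ℂ (cmap A), ‖μ‖ < 1) (θ : ℝ) :
    IsUnit (Ecirc A θ) := by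
  by_contra h
  have hmem : Complex.exp ((θ:ℂ) * Complex.I) ∈ spectrum ℂ (cmap A) := by
    rw [spectrum.mem_iff]
    rwa [Algebra.algebraMap_eq_smul_one]
  have := hρ _ hmem
  rw [Complex.norm_exp_ofReal_mul_I] at this
  linarith

lemma Ecirc_det_ne (A : Matrix (Fin d) (Fin d) ℝ)
    (hρ : ∀ μ ∈ spectrum ℂ (cmap A), ‖μ‖ < 1) (θ : ℝ) :
    (Ecirc A θ).det ≠ 0 := by
  have := (Matrix.isUnit_iff_isUnit_det _).1 (Ecirc_isUnit A hρ θ)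
  exact IsUnit.ne_zero this

lemma exists_circ_bound (A : Matrix (Fin d) (Fin d) ℝ)
    (hρ : ∀ μ ∈ spectrum ℂ (cmap A), ‖μ‖ < 1) (B : Matrix (Fin d) (Fin p) ℝ) :
    ∃ M2 : ℝ, 0 ≤ M2 ∧ ∀ k ℓ : ℕ, 1 ≤ k → ℓ ≤ k →
      ∑ i, ∑ j, Complex.normSq (((Emat k (cmap A) ℓ)⁻¹ * cmap B) i j) ≤ M2 := by
  set F : ℝ → ℝ := fun θ => ∑ i, ∑ j, Complex.normSq (((Ecirc A θ)⁻¹ * cmap B) i j) with hF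
  have hEcont : Continuous fun θ : ℝ => Ecirc A θ := by
    apply Continuous.sub _ continuous_const
    exact (Complex.continuous_exp.comp (Complex.continuous_ofReal.mul continuous_const)).smul
      continuous_const
  have hinv : Continuous fun θ : ℝ => (Ecirc A θ)⁻¹ := by
    have h1 : Continuous fun θ : ℝ => ((Ecirc A θ).det)⁻¹ • (Ecirc A θ).adjugate :=
      (hEcont.matrix_det.inv₀ (Ecirc_det_ne A hρ)).smul hEcont.matrix_adjugate
    have h2 : (fun θ : ℝ => (Ecirc A θ)⁻¹)
        = fun θ : ℝ => ((Ecirc A θ).det)⁻¹ • (Ecirc A θ).adjugate := by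
      funext θ
      rw [Matrix.inv_def, Ring.inverse_eq_inv']
    rw [h2]
    exact h1
  have hFcont : Continuous F := by
    apply continuous_finset_sum
    intro i _
    apply continuous_finset_sum
    intro j _
    exact Complex.continuous_normSq.comp ((hinv.matrix_mul continuous_const).matrix_elem i j)
  have hne : (Set.Icc (0:ℝ) (2*Real.pi)).Nonempty := by
    refine ⟨0, Set.mem_Icc.2 ⟨le_refl 0, by positivity⟩⟩
  obtain ⟨x0, _, hx0⟩ := isCompact_Icc.exists_isMaxOn hne hFcont.continuousOn
  refine ⟨F x0, ?_, ?_⟩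
  · rw [hF]
    exact Finset.sum_nonneg fun i _ => Finset.sum_nonneg fun j _ => Complex.normSq_nonneg _
  · intro k ℓ hk hℓ
    have hmem : freq k ℓ ∈ Set.Icc (0:ℝ) (2*Real.pi) := by
      have hk' : (0:ℝ) < k := by exact_mod_cast hk
      constructor
      · rw [freq]; positivity
      · rw [freq, div_le_iff₀ hk']
        have hℓ' : (ℓ:ℝ) ≤ (k:ℝ) := by exact_mod_cast hℓ
        nlinarith [Real.pi_pos]
    have := hx0 hmem
    rw [Emat_eq_Ecirc]
    exact this


lemma lamMin_Nk_le_bound (hd : 1 ≤ d) {k : ℕ} (hk : 1 ≤ k)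
    (A : Matrix (Fin d) (Fin d) ℝ) (B : Matrix (Fin d) (Fin p) ℝ) (σ γ : ℝ)
    {S M2 : ℝ} (hM20 : 0 ≤ M2)
    (hS : ∑ s ∈ Finset.range k, ∑ i, ∑ j, Complex.normSq (((cmap A) ^ s) i j) ≤ S)
    (hM2 : ∀ ℓ : ℕ, ℓ ≤ k →
      ∑ i, ∑ j, Complex.normSq (((Emat k (cmap A) ℓ)⁻¹ * cmap B) i j) ≤ M2)
    {U : ℕ → Fin p → ℂ} (hU : Feas' p k γ U) :
    lamMin (Nk A B σ k U) ≤ σ^2 * S + M2 * γ^2 := by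
  set i0 : Fin d := ⟨0, hd⟩ with hi0
  refine le_trans (lamMin_le_qf (qf_Nk_nonneg A B σ k U) (enormC_e0 hd)) ?_
  rw [qf_Nk]
  have hterm1 : ∑ s ∈ Finset.range k, ∑ i,
      Complex.normSq (((cmap (A ^ s))ᴴ.mulVec (e0 hd)) i) ≤ S := by
    refine le_trans (Finset.sum_le_sum fun s _ => ?_) hS
    have hmv : ∀ i, ((cmap (A ^ s))ᴴ.mulVec (e0 hd)) i = star (((cmap A) ^ s) i0 i) := by
      intro i
      rw [e0, Matrix.mulVec_single]
      simp [-Matrix.conjTranspose_pow, Matrix.conjTranspose_apply, cmap_pow, hi0]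
    have h1 : ∀ i, Complex.normSq (((cmap (A ^ s))ᴴ.mulVec (e0 hd)) i)
        = Complex.normSq (((cmap A) ^ s) i0 i) := by
      intro i
      rw [hmv i]
      exact Complex.normSq_conj _
    rw [Finset.sum_congr rfl fun i _ => h1 i]
    exact Finset.single_le_sum
      (f := fun i' => ∑ i, Complex.normSq (((cmap A) ^ s) i' i))
      (fun i' _ => Finset.sum_nonneg fun i _ => Complex.normSq_nonneg _)
      (Finset.mem_univ i0)
  have hterm2 : ((k : ℝ) ^ 2)⁻¹ * ∑ ℓ ∈ Finset.Icc 1 k,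
      Complex.normSq (dotProduct
        (star (((Emat k (cmap A) ℓ)⁻¹ * cmap B).mulVec (U ℓ))) (e0 hd)) ≤ M2 * γ^2 := by
    have hper : ∀ ℓ ∈ Finset.Icc 1 k,
        Complex.normSq (dotProduct
          (star (((Emat k (cmap A) ℓ)⁻¹ * cmap B).mulVec (U ℓ))) (e0 hd))
        ≤ M2 * enormC (U ℓ)^2 := by
      intro ℓ hℓ
      simp only [Finset.mem_Icc] at hℓ
      set Mℓ := (Emat k (cmap A) ℓ)⁻¹ * cmap B with hMℓ
      have hdot : dotProduct (star (Mℓ.mulVec (U ℓ))) (e0 hd)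
          = star ((Mℓ.mulVec (U ℓ)) i0) := by
        rw [e0, dotProduct_single, mul_one, Pi.star_apply]
      rw [hdot, show Complex.normSq (star ((Mℓ.mulVec (U ℓ)) i0))
        = Complex.normSq ((Mℓ.mulVec (U ℓ)) i0) from Complex.normSq_conj _]
      have hx : (Mℓ.mulVec (U ℓ)) i0 = ∑ j, Mℓ i0 j * U ℓ j := rfl
      rw [hx]
      have habs : ‖∑ j, Mℓ i0 j * U ℓ j‖
          ≤ ∑ j, ‖Mℓ i0 j‖ * ‖U ℓ j‖ := by
        refine le_trans (norm_sum_le _ _) ?_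
        exact le_of_eq (Finset.sum_congr rfl fun j _ => norm_mul _ _)
      have hcs : (∑ j, ‖Mℓ i0 j‖ * ‖U ℓ j‖)^2
          ≤ (∑ j, ‖Mℓ i0 j‖^2) * (∑ j, ‖U ℓ j‖^2) :=
        Finset.sum_mul_sq_le_sq_mul_sq _ _ _
      have hrow : (∑ j, ‖Mℓ i0 j‖^2) ≤ M2 := by
        refine le_trans ?_ (hM2 ℓ hℓ.2)
        have : ∀ j, ‖Mℓ i0 j‖^2 = Complex.normSq (Mℓ i0 j) :=
          fun j => Complex.sq_norm _
        rw [Finset.sum_congr rfl fun j _ => this j]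
        exact Finset.single_le_sum
          (f := fun i' => ∑ j, Complex.normSq (Mℓ i' j))
          (fun i' _ => Finset.sum_nonneg fun j _ => Complex.normSq_nonneg _)
          (Finset.mem_univ i0)
      have henorm : (∑ j, ‖U ℓ j‖^2) = enormC (U ℓ)^2 := (enormC_sq _).symm
      have h0 : (0:ℝ) ≤ ‖∑ j, Mℓ i0 j * U ℓ j‖ := norm_nonneg _
      have h1 : Complex.normSq (∑ j, Mℓ i0 j * U ℓ j)
          = ‖∑ j, Mℓ i0 j * U ℓ j‖ ^ 2 := (Complex.sq_norm _).symm
      rw [h1]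
      calc ‖∑ j, Mℓ i0 j * U ℓ j‖ ^ 2
          ≤ (∑ j, ‖Mℓ i0 j‖ * ‖U ℓ j‖)^2 := by
            have hsn : 0 ≤ ∑ j, ‖Mℓ i0 j‖ * ‖U ℓ j‖ :=
              Finset.sum_nonneg fun j _ => mul_nonneg (norm_nonneg _) (norm_nonneg _)
            nlinarith
        _ ≤ (∑ j, ‖Mℓ i0 j‖^2) * (∑ j, ‖U ℓ j‖^2) := hcs
        _ ≤ M2 * enormC (U ℓ)^2 := by
            rw [henorm]
            apply mul_le_mul_of_nonneg_right hrow
            rw [← henorm]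
            exact Finset.sum_nonneg fun j _ => sq_nonneg _
    have hsum : ∑ ℓ ∈ Finset.Icc 1 k,
        Complex.normSq (dotProduct
          (star (((Emat k (cmap A) ℓ)⁻¹ * cmap B).mulVec (U ℓ))) (e0 hd))
        ≤ M2 * ((k:ℝ)^2 * γ^2) := by
      refine le_trans (Finset.sum_le_sum hper) ?_
      rw [← Finset.mul_sum]
      exact mul_le_mul_of_nonneg_left hU.2 hM20
    have hk2 : ((k:ℝ)^2) ≠ 0 := by
      have : (k:ℝ) ≠ 0 := Nat.cast_ne_zero.2 (by omega)
      positivity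
    calc ((k : ℝ) ^ 2)⁻¹ * ∑ ℓ ∈ Finset.Icc 1 k,
        Complex.normSq (dotProduct
          (star (((Emat k (cmap A) ℓ)⁻¹ * cmap B).mulVec (U ℓ))) (e0 hd))
        ≤ ((k : ℝ) ^ 2)⁻¹ * (M2 * ((k:ℝ)^2 * γ^2)) :=
          mul_le_mul_of_nonneg_left hsum (by positivity)
      _ = M2 * γ^2 := by field_simp
  have h1 : σ^2 * ∑ s ∈ Finset.range k, ∑ i,
      Complex.normSq (((cmap (A ^ s))ᴴ.mulVec (e0 hd)) i) ≤ σ^2 * S :=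
    mul_le_mul_of_nonneg_left hterm1 (sq_nonneg σ)
  exact add_le_add h1 hterm2


lemma feas_zero (k : ℕ) {γ : ℝ} (hγ : 0 ≤ γ) : Feas' p k γ (fun _ _ => (0:ℂ)) := by
  constructor
  · exact ⟨fun _ _ => 0, fun ℓ _ j => by simp⟩
  · have h0 : ∀ ℓ ∈ Finset.Icc 1 k, enormC (fun _ : Fin p => (0:ℂ)) ^ 2 = 0 := by
      intro ℓ _
      simp [enormC]
    rw [Finset.sum_congr rfl h0, Finset.sum_const, smul_zero]
    positivity

end Stmt18

open Stmt18

/-- **Existence of the limiting optimal excitation level.**  For any `k₀ ≥ 1`, the sequence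
`i ↦ Ψ(k₀·2^i)` converges to a finite limit. -/
theorem stmt18 {d p : ℕ} (hd : 1 ≤ d) (hp : 1 ≤ p) (σ γ : ℝ) (hσ : 0 ≤ σ) (hγ : 0 < γ)
    (A : Matrix (Fin d) (Fin d) ℝ)
    (hρ : ∀ μ ∈ spectrum ℂ (cmap A), ‖μ‖ < 1)
    (B : Matrix (Fin d) (Fin p) ℝ) (k₀ : ℕ) (hk₀ : 1 ≤ k₀) :
    ∃ c : ℝ, Filter.Tendsto (fun i : ℕ => Psi A B σ γ (k₀ * 2 ^ i))
      Filter.atTop (nhds c) := by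
  obtain ⟨S, hS0, hS⟩ := exists_powsum_bound hd A hρ
  obtain ⟨M2, hM20, hM2⟩ := exists_circ_bound A hρ B
  set CC := σ^2 * S + M2 * γ^2 with hCC
  have hCC0 : 0 ≤ CC := by positivity
  have hPsiEq : ∀ k : ℕ, Psi A B σ γ k
      = sSup {r : ℝ | ∃ U, Feas' p k γ U ∧ r = lamMin (Nk A B σ k U)} := fun k => rfl
  have hub : ∀ k : ℕ, 1 ≤ k → ∀ r ∈ {r : ℝ | ∃ U, Feas' p k γ U ∧
      r = lamMin (Nk A B σ k U)}, r ≤ CC := by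
    rintro k hk r ⟨U, hU, rfl⟩
    exact lamMin_Nk_le_bound hd hk A B σ γ hM20 (hS k) (fun ℓ hℓ => hM2 k ℓ hk hℓ) hU
  have hzero_mem : ∀ k : ℕ, lamMin (Nk A B σ k (fun _ _ => (0:ℂ)))
      ∈ {r : ℝ | ∃ U, Feas' p k γ U ∧ r = lamMin (Nk A B σ k U)} :=
    fun k => ⟨_, feas_zero k hγ.le, rfl⟩
  have hmono : ∀ k : ℕ, 1 ≤ k → Psi A B σ γ k ≤ Psi A B σ γ (2*k) := by
    intro k hk
    rw [hPsiEq, hPsiEq]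
    have hbdd2 : BddAbove {r : ℝ | ∃ U, Feas' p (2*k) γ U ∧
        r = lamMin (Nk A B σ (2*k) U)} :=
      ⟨CC, fun r hr => hub (2*k) (by omega) r hr⟩
    have hnn : (0:ℝ) ≤ sSup {r : ℝ | ∃ U, Feas' p (2*k) γ U ∧
        r = lamMin (Nk A B σ (2*k) U)} :=
      le_trans (lamMin_nonneg hd (qf_Nk_nonneg A B σ (2*k) _))
        (le_csSup hbdd2 (hzero_mem (2*k)))
    refine Real.sSup_le ?_ hnn
    rintro r ⟨U, hU, rfl⟩
    obtain ⟨U', hU', heven, hodd⟩ := feas_double hk U hU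
    exact le_trans (lamMin_Nk_le_double hd hk A B σ heven hodd)
      (le_csSup hbdd2 ⟨U', hU', rfl⟩)
  have hkp : ∀ i : ℕ, 1 ≤ k₀ * 2^i := by
    intro i
    have h1 : 1 ≤ 2^i := Nat.one_le_two_pow
    calc 1 = 1 * 1 := by ring
      _ ≤ k₀ * 2^i := Nat.mul_le_mul hk₀ h1
  have hb : ∀ i : ℕ, Psi A B σ γ (k₀ * 2^i) ≤ CC := by
    intro i
    rw [hPsiEq]
    exact Real.sSup_le (hub _ (hkp i) ·) hCC0 |>.trans (le_refl _)
  have hmon : Monotone (fun i : ℕ => Psi A B σ γ (k₀ * 2^i)) := by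
    apply monotone_nat_of_le_succ
    intro i
    have h2 : k₀ * 2^(i+1) = 2 * (k₀ * 2^i) := by ring
    rw [h2]
    exact hmono _ (hkp i)
  exact ⟨_, tendsto_atTop_ciSup hmon ⟨CC, by rintro x ⟨i, rfl⟩; exact hb i⟩⟩
end
end
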